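/- arXiv:2310.14043 — 8 statements merged into one kernel-verified Lean document; each statement's English description precedes it below -/
import Mathlib

section
/- An n × n doubly stochastic matrix D satisfies tr_min(D) = 1 if and only if D = J_n, the matrix all of whose entries equal 1/n. -/
open Matrix BigOperators

/-- The matrix `J_n` with all entries equal to `1/n`. -/
noncomputable def matJ (n : ℕ) : Matrix (Fin n) (Fin n) ℝ :=
  Matrix.of fun _ _ => (n : ℝ)⁻¹

/-- The singular values of a real square matrix: the square roots of the
eigenvalues of `Aᴴ * A` (`Aᴴ = Aᵀ` over `ℝ`). -/
noncomputable def singularValues {n : ℕ} (A : Matrix (Fin n) (Fin n) ℝ) : Fin n → ℝ :=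
  fun i => Real.sqrt ((Matrix.isHermitian_conjTranspose_mul_self A).eigenvalues i)

/-- The Schatten `p`-norm of a real square matrix. -/
noncomputable def schattenNorm {n : ℕ} (p : ℝ) (A : Matrix (Fin n) (Fin n) ℝ) : ℝ :=
  (∑ i, singularValues A i ^ p) ^ (1 / p)

/-- The Frobenius norm of a real square matrix. -/
noncomputable def frobNorm {n : ℕ} (A : Matrix (Fin n) (Fin n) ℝ) : ℝ :=
  Real.sqrt (∑ i, ∑ j, (A i j) ^ 2)

/-- The minimal trace of a square matrix: the minimum over all permutations `σ`
of `∑ i, A i (σ i)`. -/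
noncomputable def trMin {n : ℕ} (A : Matrix (Fin n) (Fin n) ℝ) : ℝ :=
  ⨅ σ : Equiv.Perm (Fin n), ∑ i, A i (σ i)

/-- A matrix is a permutation matrix if it is the matrix of some permutation. -/
def IsPermMatrix {n : ℕ} (P : Matrix (Fin n) (Fin n) ℝ) : Prop :=
  ∃ σ : Equiv.Perm (Fin n), P = σ.permMatrix ℝ


open Finset

lemma sum_swap_aux {n : ℕ} (f g : Fin n → ℝ) (i k : Fin n) (hik : i ≠ k)
    (h : ∀ x, x ≠ i → x ≠ k → f x = g x) :
    ∑ x, f x + (g i + g k) = ∑ x, g x + (f i + f k) := by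
  have hi : i ∈ (univ : Finset (Fin n)) := mem_univ i
  have hk : k ∈ (univ : Finset (Fin n)).erase i := by
    simp [Ne.symm hik]
  have key : ∀ F : Fin n → ℝ, ∑ x, F x
      = F i + (F k + ∑ x ∈ ((univ : Finset (Fin n)).erase i).erase k, F x) := by
    intro F
    rw [← Finset.add_sum_erase _ F hi, ← Finset.add_sum_erase _ F hk]
  have hcong : ∑ x ∈ ((univ : Finset (Fin n)).erase i).erase k, f x
      = ∑ x ∈ ((univ : Finset (Fin n)).erase i).erase k, g x := by
    refine Finset.sum_congr rfl fun x hx => ?_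
    simp only [Finset.mem_erase] at hx
    exact h x hx.2.1 hx.1
  rw [key f, key g, hcong]; ring

/-- An `n × n` doubly stochastic matrix `D` satisfies `tr_min(D) = 1`
iff `D = J_n`. -/
theorem trMin_eq_one_iff_eq_matJ {n : ℕ} (hn : 0 < n) (D : Matrix (Fin n) (Fin n) ℝ)
    (hD : D ∈ doublyStochastic ℝ (Fin n)) :
    trMin D = 1 ↔ D = matJ n := by
  haveI : NeZero n := ⟨hn.ne'⟩
  obtain ⟨hpos, hrow, hcol⟩ := mem_doublyStochastic_iff_sum.1 hD
  set S : Equiv.Perm (Fin n) → ℝ := fun σ => ∑ i, D i (σ i) with hS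
  have hbdd : BddBelow (Set.range S) := (Set.finite_range S).bddBelow
  constructor
  · intro h1
    -- every permutation trace is ≥ 1
    have hge : ∀ σ, 1 ≤ S σ := fun σ => h1 ▸ ciInf_le hbdd σ
    -- every permutation trace is = 1
    have heq : ∀ σ, S σ = 1 := by
      intro τ
      have hsum : ∑ m : Fin n, S (τ.trans (Equiv.addRight m)) = n := by
        have : ∀ m : Fin n, S (τ.trans (Equiv.addRight m)) = ∑ i, D i (τ i + m) := by
          intro m; rfl
        simp only [this]
        rw [Finset.sum_comm]
        have : ∀ i : Fin n, ∑ m : Fin n, D i (τ i + m) = 1 := by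
          intro i
          exact (Fintype.sum_equiv (Equiv.addLeft (τ i))
            (fun m => D i (τ i + m)) (fun j => D i j) (fun m => rfl)).trans (hrow i)
        simp [this]
      have hzero : ∑ m : Fin n, (S (τ.trans (Equiv.addRight m)) - 1) = 0 := by
        rw [Finset.sum_sub_distrib, hsum]; simp
      have hall := (Finset.sum_eq_zero_iff_of_nonneg
        (fun m _ => sub_nonneg.2 (hge _))).1 hzero
      have h0 := hall 0 (mem_univ 0)
      have : S (τ.trans (Equiv.addRight (0 : Fin n))) = 1 := by linarith [sub_eq_zero.1 h0]
      have e : τ.trans (Equiv.addRight (0 : Fin n)) = τ := by ext x; simp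
      rw [e] at this; exact this
    -- exchange relation
    have hexch : ∀ i k j l : Fin n, D i j + D k l = D i l + D k j := by
      intro i k j l
      rcases eq_or_ne i k with rfl | hik
      · ring
      rcases eq_or_ne j l with rfl | hjl
      · ring
      -- build σ with σ i = j, σ k = l
      set π : Equiv.Perm (Fin n) := Equiv.addRight (j - i) with hπ
      have hπi : π i = j := by simp [hπ]
      have hπk : π k ≠ j := fun hc => hik (π.injective (hc.trans hπi.symm)).symm
      set σ : Equiv.Perm (Fin n) := π.trans (Equiv.swap l (π k)) with hσ
      have hσi : σ i = j := by
        simp only [hσ, Equiv.trans_apply, hπi]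
        exact Equiv.swap_apply_of_ne_of_ne hjl (Ne.symm hπk)
      have hσk : σ k = l := by
        simp only [hσ, Equiv.trans_apply]
        exact Equiv.swap_apply_right l (π k)
      set σ' : Equiv.Perm (Fin n) := (Equiv.swap i k).trans σ with hσ'
      have hkey := sum_swap_aux (fun x => D x (σ' x)) (fun x => D x (σ x)) i k hik
        (fun x hxi hxk => by
          simp only [hσ', Equiv.trans_apply, Equiv.swap_apply_of_ne_of_ne hxi hxk])
      have h1 : S σ = 1 := heq σ
      have h2 : S σ' = 1 := heq σ'
      have hσ'i : σ' i = l := by simp [hσ', Equiv.swap_apply_left, hσk]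
      have hσ'k : σ' k = j := by simp [hσ', Equiv.swap_apply_right, hσi]
      simp only [hσi, hσk, hσ'i, hσ'k] at hkey
      have := hkey
      simp only [hS] at h1 h2
      linarith
    -- conclude D = matJ
    funext i
    funext j
    show D i j = (n : ℝ)⁻¹
    have hA : ∀ k, ∑ l, (D i j + D k l) = n * D i j + 1 := fun k => by
      rw [Finset.sum_add_distrib, hrow k, Finset.sum_const, card_univ, Fintype.card_fin,
        nsmul_eq_mul]
    have hB : ∀ k, ∑ l, (D i l + D k j) = 1 + n * D k j := fun k => by
      rw [Finset.sum_add_distrib, hrow i, Finset.sum_const, card_univ, Fintype.card_fin,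
        nsmul_eq_mul]
    have hkey : ∑ k : Fin n, ∑ l : Fin n, (D i j + D k l)
        = ∑ k : Fin n, ∑ l : Fin n, (D i l + D k j) :=
      Finset.sum_congr rfl fun k _ => Finset.sum_congr rfl fun l _ => hexch i k j l
    rw [Finset.sum_congr rfl (fun k _ => hA k), Finset.sum_congr rfl (fun k _ => hB k)] at hkey
    rw [Finset.sum_const, card_univ, Fintype.card_fin, nsmul_eq_mul,
      Finset.sum_add_distrib, Finset.sum_const, card_univ, Fintype.card_fin, nsmul_eq_mul,
      ← Finset.mul_sum, hcol j] at hkey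
    have hn' : (n : ℝ) ≠ 0 := Nat.cast_ne_zero.2 hn.ne'
    have h2 : ((n : ℝ) * (n : ℝ)) * D i j = (n : ℝ) := by ring_nf; ring_nf at hkey; linarith
    rw [show ((n : ℝ))⁻¹ = (n : ℝ) / ((n : ℝ) * (n : ℝ)) by field_simp]
    rw [eq_div_iff (by positivity)]
    linarith
  · intro h
    subst h
    have hc : ∀ σ : Equiv.Perm (Fin n), S σ = 1 := by
      intro σ
      simp only [hS, matJ, Matrix.of_apply, Finset.sum_const, card_univ, Fintype.card_fin,
        nsmul_eq_mul]
      field_simp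
    unfold trMin
    rw [show (fun σ : Equiv.Perm (Fin n) => ∑ i, matJ n i (σ i)) = fun _ => 1 from funext hc]
    exact ciInf_const
end

section
/- Let 1 ≤ p < ∞ and let D be an n × n doubly stochastic matrix. Then 1 ≤ ‖D‖_{S_p}, and equality ‖D‖_{S_p} = 1 holds if and only if D = J_n, the matrix all of whose entries equal 1/n. -/
open Matrix BigOperators

section SchattenAux

open Finset

variable {n : ℕ}

lemma aux_transpose_mem {D : Matrix (Fin n) (Fin n) ℝ}
    (hD : D ∈ doublyStochastic ℝ (Fin n)) : Dᵀ ∈ doublyStochastic ℝ (Fin n) := by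
  rw [mem_doublyStochastic_iff_sum] at hD ⊢
  exact ⟨fun i j => hD.1 j i, fun i => hD.2.2 i, fun j => hD.2.1 j⟩

lemma aux_conjT (D : Matrix (Fin n) (Fin n) ℝ) : Dᴴ = Dᵀ := by
  ext i j; simp [conjTranspose_apply]

lemma aux_M_mem {D : Matrix (Fin n) (Fin n) ℝ}
    (hD : D ∈ doublyStochastic ℝ (Fin n)) : Dᴴ * D ∈ doublyStochastic ℝ (Fin n) := by
  rw [aux_conjT]
  exact mul_mem (aux_transpose_mem hD) hD

lemma aux_exists_eigone (hn : 0 < n) {D : Matrix (Fin n) (Fin n) ℝ}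
    (hD : D ∈ doublyStochastic ℝ (Fin n)) :
    ∃ i, (Matrix.isHermitian_conjTranspose_mul_self D).eigenvalues i = 1 := by
  have hM := Matrix.isHermitian_conjTranspose_mul_self D
  have hone : (Dᴴ * D) *ᵥ 1 = 1 := mulVec_one_of_mem_doublyStochastic (aux_M_mem hD)
  have h1 : (1 : ℝ) ∈ spectrum ℝ (Dᴴ * D) := by
    rw [spectrum.mem_iff]
    intro h
    have h' : IsUnit ((1 : Matrix (Fin n) (Fin n) ℝ) - Dᴴ * D) := by
      simpa using h
    obtain ⟨u, hu⟩ := h'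
    have hv : ((1 : Matrix (Fin n) (Fin n) ℝ) - Dᴴ * D) *ᵥ 1 = 0 := by
      rw [sub_mulVec, one_mulVec, hone, sub_self]
    have key : (1 : Fin n → ℝ) = 0 := by
      have hinv : (↑u⁻¹ : Matrix (Fin n) (Fin n) ℝ) * ((1 : Matrix (Fin n) (Fin n) ℝ) - Dᴴ * D) = 1 := by
        rw [← hu]; exact u.inv_mul
      have h2 : ((↑u⁻¹ : Matrix (Fin n) (Fin n) ℝ) * ((1 : Matrix (Fin n) (Fin n) ℝ) - Dᴴ * D)) *ᵥ (1 : Fin n → ℝ) = (1 : Fin n → ℝ) := by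
        rw [hinv, one_mulVec]
      rw [← mulVec_mulVec, hv, mulVec_zero] at h2
      exact h2.symm
    have := congrFun key ⟨0, hn⟩
    simp at this
  have hU1 : (hM.eigenvectorUnitary : Matrix (Fin n) (Fin n) ℝ) *
      star (hM.eigenvectorUnitary : Matrix (Fin n) (Fin n) ℝ) = 1 :=
    Matrix.mem_unitaryGroup_iff.mp hM.eigenvectorUnitary.2
  have hU2 : star (hM.eigenvectorUnitary : Matrix (Fin n) (Fin n) ℝ) *
      (hM.eigenvectorUnitary : Matrix (Fin n) (Fin n) ℝ) = 1 :=
    Matrix.mem_unitaryGroup_iff'.mp hM.eigenvectorUnitary.2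
  have hspec : spectrum ℝ (Dᴴ * D) =
      spectrum ℝ (Matrix.diagonal (RCLike.ofReal ∘ hM.eigenvalues) : Matrix (Fin n) (Fin n) ℝ) := by
    conv_lhs => rw [hM.spectral_theorem, Unitary.conjStarAlgAut_apply]
    let u : (Matrix (Fin n) (Fin n) ℝ)ˣ :=
      ⟨(hM.eigenvectorUnitary : Matrix (Fin n) (Fin n) ℝ),
       star (hM.eigenvectorUnitary : Matrix (Fin n) (Fin n) ℝ), hU1, hU2⟩
    have h3 : star (hM.eigenvectorUnitary : Matrix (Fin n) (Fin n) ℝ) =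
        (↑u⁻¹ : Matrix (Fin n) (Fin n) ℝ) := rfl
    have h4 : (hM.eigenvectorUnitary : Matrix (Fin n) (Fin n) ℝ) =
        (↑u : Matrix (Fin n) (Fin n) ℝ) := rfl
    rw [h3, h4]
    exact spectrum.units_conjugate
  rw [hspec, spectrum_diagonal] at h1
  obtain ⟨i, hi⟩ := h1
  exact ⟨i, by simpa using hi⟩

lemma aux_eig_nonneg (D : Matrix (Fin n) (Fin n) ℝ) (i : Fin n) :
    0 ≤ (Matrix.isHermitian_conjTranspose_mul_self D).eigenvalues i :=
  Matrix.eigenvalues_conjTranspose_mul_self_nonneg D i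

lemma aux_sum_eig (D : Matrix (Fin n) (Fin n) ℝ) :
    ∑ i, (Matrix.isHermitian_conjTranspose_mul_self D).eigenvalues i
      = ∑ i, ∑ k, (D k i) ^ 2 := by
  have hM := Matrix.isHermitian_conjTranspose_mul_self D
  have hU2 : star (hM.eigenvectorUnitary : Matrix (Fin n) (Fin n) ℝ) *
      (hM.eigenvectorUnitary : Matrix (Fin n) (Fin n) ℝ) = 1 :=
    Matrix.mem_unitaryGroup_iff'.mp hM.eigenvectorUnitary.2
  have htr : (Dᴴ * D).trace = ∑ i, (hM.eigenvalues i) := by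
    conv_lhs => rw [hM.spectral_theorem, Unitary.conjStarAlgAut_apply]
    rw [Matrix.trace_mul_cycle, hU2, one_mul, Matrix.trace_diagonal]
    simp
  have htr2 : (Dᴴ * D).trace = ∑ i, ∑ k, (D k i) ^ 2 := by
    simp [Matrix.trace, Matrix.diag, Matrix.mul_apply, Matrix.conjTranspose_apply, sq]
  rw [← htr, htr2]

lemma aux_eq_matJ (hn : 0 < n) {D : Matrix (Fin n) (Fin n) ℝ}
    (hD : D ∈ doublyStochastic ℝ (Fin n))
    (h : ∑ i, ∑ k, (D k i) ^ 2 = 1) : D = matJ n := by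
  have hn0 : (n : ℝ) ≠ 0 := Nat.cast_ne_zero.mpr hn.ne'
  have hsum : ∑ i : Fin n, ∑ k : Fin n, D k i = n := by
    rw [Finset.sum_congr rfl fun i _ => sum_col_of_mem_doublyStochastic hD i]
    simp
  have key : ∑ i : Fin n, ∑ k : Fin n, (D k i - (n : ℝ)⁻¹) ^ 2 = 0 := by
    have expand : ∀ i k : Fin n, (D k i - (n : ℝ)⁻¹) ^ 2
        = (D k i) ^ 2 - 2 * (n : ℝ)⁻¹ * D k i + (n : ℝ)⁻¹ ^ 2 := fun i k => by ring
    simp_rw [expand, Finset.sum_add_distrib, Finset.sum_sub_distrib, ← Finset.mul_sum,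
      Finset.sum_const, Finset.card_univ, Fintype.card_fin, nsmul_eq_mul]
    rw [h, hsum]
    field_simp
    ring
  have hzero : ∀ i ∈ Finset.univ, ∀ k ∈ Finset.univ, (D k i - (n : ℝ)⁻¹) ^ 2 = 0 := by
    intro i _
    have h1 := (Finset.sum_eq_zero_iff_of_nonneg
      (fun i _ => Finset.sum_nonneg fun k _ => sq_nonneg _)).mp key i (Finset.mem_univ i)
    exact fun k _ => (Finset.sum_eq_zero_iff_of_nonneg (fun k _ => sq_nonneg _)).mp h1 k
      (Finset.mem_univ k)
  ext k i
  have := hzero i (Finset.mem_univ i) k (Finset.mem_univ k)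
  have h2 : D k i - (n : ℝ)⁻¹ = 0 := by
    exact pow_eq_zero_iff (by norm_num) |>.mp this
  have : D k i = (n : ℝ)⁻¹ := by linarith
  simpa [matJ] using this

lemma aux_matJ_mem (hn : 0 < n) : matJ n ∈ doublyStochastic ℝ (Fin n) := by
  have hn0 : (n : ℝ) ≠ 0 := Nat.cast_ne_zero.mpr hn.ne'
  rw [mem_doublyStochastic_iff_sum]
  refine ⟨fun i j => by simp only [matJ, Matrix.of_apply]; positivity, fun i => ?_, fun j => ?_⟩ <;>
  · simp only [matJ, Matrix.of_apply, Finset.sum_const, Finset.card_univ, Fintype.card_fin,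
      nsmul_eq_mul]
    field_simp

lemma aux_matJ_sq (hn : 0 < n) : ∑ i : Fin n, ∑ k : Fin n, (matJ n k i) ^ 2 = 1 := by
  have hn0 : (n : ℝ) ≠ 0 := Nat.cast_ne_zero.mpr hn.ne'
  simp only [matJ, Matrix.of_apply, Finset.sum_const, Finset.card_univ, Fintype.card_fin,
    nsmul_eq_mul]
  field_simp

lemma aux_eig_zero_of_sum {D : Matrix (Fin n) (Fin n) ℝ} {i₀ : Fin n}
    (hi₀ : (Matrix.isHermitian_conjTranspose_mul_self D).eigenvalues i₀ = 1)
    (h : ∑ i, ∑ k, (D k i) ^ 2 = 1) :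
    ∀ i, i ≠ i₀ → (Matrix.isHermitian_conjTranspose_mul_self D).eigenvalues i = 0 := by
  have hnn := aux_eig_nonneg D
  have hsum : ∑ i, (Matrix.isHermitian_conjTranspose_mul_self D).eigenvalues i = 1 := by
    rw [aux_sum_eig D, h]
  have hadd := Finset.add_sum_erase Finset.univ
    (Matrix.isHermitian_conjTranspose_mul_self D).eigenvalues (Finset.mem_univ i₀)
  rw [hsum, hi₀] at hadd
  have hrest : ∑ i ∈ Finset.univ.erase i₀,
      (Matrix.isHermitian_conjTranspose_mul_self D).eigenvalues i = 0 := by linarith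
  intro i hi
  exact (Finset.sum_eq_zero_iff_of_nonneg (fun j _ => hnn j)).mp hrest i
    (Finset.mem_erase.mpr ⟨hi, Finset.mem_univ i⟩)

lemma aux_schatten_eq_one (hn : 0 < n) {p : ℝ} (hp : 1 ≤ p) {D : Matrix (Fin n) (Fin n) ℝ}
    (hD : D ∈ doublyStochastic ℝ (Fin n)) (h : ∑ i, ∑ k, (D k i) ^ 2 = 1) :
    schattenNorm p D = 1 := by
  have hp0 : (0 : ℝ) < p := lt_of_lt_of_le one_pos hp
  obtain ⟨i₀, hi₀⟩ := aux_exists_eigone hn hD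
  have hz := aux_eig_zero_of_sum hi₀ h
  have hσ : ∀ i, singularValues D i ^ p = if i = i₀ then 1 else 0 := by
    intro i
    by_cases hii : i = i₀
    · subst hii
      rw [singularValues, hi₀]; simp [Real.one_rpow]
    · rw [singularValues, hz i hii]; simp [hii, Real.zero_rpow hp0.ne']
  rw [schattenNorm, Finset.sum_congr rfl fun i _ => hσ i]
  simp [Real.one_rpow]

lemma aux_one_le (hn : 0 < n) {p : ℝ} (hp : 1 ≤ p) {D : Matrix (Fin n) (Fin n) ℝ}
    (hD : D ∈ doublyStochastic ℝ (Fin n)) : 1 ≤ schattenNorm p D := by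
  have hp0 : (0 : ℝ) < p := lt_of_lt_of_le one_pos hp
  obtain ⟨i₀, hi₀⟩ := aux_exists_eigone hn hD
  have hσ0 : singularValues D i₀ ^ p = 1 := by
    rw [singularValues, hi₀]; simp [Real.one_rpow]
  have hS1 : 1 ≤ ∑ i, singularValues D i ^ p := by
    rw [← hσ0]
    exact Finset.single_le_sum
      (fun i _ => Real.rpow_nonneg (Real.sqrt_nonneg _) _) (Finset.mem_univ i₀)
  calc (1 : ℝ) = 1 ^ (1 / p) := (Real.one_rpow _).symm
    _ ≤ (∑ i, singularValues D i ^ p) ^ (1 / p) :=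
        Real.rpow_le_rpow zero_le_one hS1 (by positivity)

lemma aux_sq_of_eq_one (hn : 0 < n) {p : ℝ} (hp : 1 ≤ p) {D : Matrix (Fin n) (Fin n) ℝ}
    (hD : D ∈ doublyStochastic ℝ (Fin n)) (h : schattenNorm p D = 1) :
    ∑ i, ∑ k, (D k i) ^ 2 = 1 := by
  have hp0 : (0 : ℝ) < p := lt_of_lt_of_le one_pos hp
  obtain ⟨i₀, hi₀⟩ := aux_exists_eigone hn hD
  have hnn := aux_eig_nonneg D
  have hterm : ∀ i, 0 ≤ singularValues D i ^ p :=
    fun i => Real.rpow_nonneg (Real.sqrt_nonneg _) _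
  have hS0 : 0 ≤ ∑ i, singularValues D i ^ p :=
    Finset.sum_nonneg fun i _ => hterm i
  rw [schattenNorm, one_div] at h
  have hS : ∑ i, singularValues D i ^ p = 1 := by
    calc ∑ i, singularValues D i ^ p
        = ((∑ i, singularValues D i ^ p) ^ p⁻¹) ^ p := (Real.rpow_inv_rpow hS0 hp0.ne').symm
      _ = (1 : ℝ) ^ p := by rw [h]
      _ = 1 := Real.one_rpow p
  have hσ0 : singularValues D i₀ ^ p = 1 := by
    rw [singularValues, hi₀]; simp [Real.one_rpow]
  have hadd := Finset.add_sum_erase Finset.univ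
    (fun i => singularValues D i ^ p) (Finset.mem_univ i₀)
  simp only [hS, hσ0] at hadd
  have hrest : ∑ i ∈ Finset.univ.erase i₀, singularValues D i ^ p = 0 := by linarith
  have hz : ∀ i, i ≠ i₀ → (Matrix.isHermitian_conjTranspose_mul_self D).eigenvalues i = 0 := by
    intro i hi
    have h1 : singularValues D i ^ p = 0 :=
      (Finset.sum_eq_zero_iff_of_nonneg (fun j _ => hterm j)).mp hrest i
        (Finset.mem_erase.mpr ⟨hi, Finset.mem_univ i⟩)
    have h2 : singularValues D i = 0 := by
      by_contra h3
      have : 0 < singularValues D i := lt_of_le_of_ne (Real.sqrt_nonneg _) (Ne.symm h3)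
      exact absurd h1 (ne_of_gt (Real.rpow_pos_of_pos this p))
    exact (Real.sqrt_eq_zero (hnn i)).mp h2
  rw [← aux_sum_eig D]
  rw [← Finset.add_sum_erase Finset.univ _ (Finset.mem_univ i₀), hi₀,
    Finset.sum_eq_zero fun i hi => hz i (Finset.mem_erase.mp hi).1, add_zero]


end SchattenAux

/-- For `1 ≤ p < ∞` and `D` doubly stochastic, `1 ≤ ‖D‖_{S_p}`, with
equality iff `D = J_n`. -/
theorem one_le_schattenNorm_doublyStochastic {n : ℕ} (hn : 0 < n) {p : ℝ} (hp : 1 ≤ p)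
    (D : Matrix (Fin n) (Fin n) ℝ) (hD : D ∈ doublyStochastic ℝ (Fin n)) :
    1 ≤ schattenNorm p D ∧ (schattenNorm p D = 1 ↔ D = matJ n) := by
  refine ⟨aux_one_le hn hp hD, ?_, ?_⟩
  · intro h
    exact aux_eq_matJ hn hD (aux_sq_of_eq_one hn hp hD h)
  · rintro rfl
    exact aux_schatten_eq_one hn hp (aux_matJ_mem hn) (aux_matJ_sq hn)
end

section
/- Let 1 ≤ p < ∞ and let D be an n × n doubly stochastic matrix. Then ‖D‖_{S_p} ≤ n^{1/p}, and equality ‖D‖_{S_p} = n^{1/p} holds if and only if D is a permutation matrix. -/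
open Matrix BigOperators

section Aux

open Finset

lemma sum_sq_mulVec_le {n : ℕ} {D : Matrix (Fin n) (Fin n) ℝ}
    (hD : D ∈ doublyStochastic ℝ (Fin n)) (x : Fin n → ℝ) :
    ∑ i, ((D *ᵥ x) i) ^ 2 ≤ ∑ j, (x j) ^ 2 := by
  have h1 : ∀ i, ((D *ᵥ x) i) ^ 2 ≤ ∑ j, D i j * (x j) ^ 2 := by
    intro i
    have := Finset.sum_sq_le_sum_mul_sum_of_sq_eq_mul Finset.univ
      (r := fun j => D i j * x j) (f := fun j => D i j) (g := fun j => D i j * (x j) ^ 2)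
      (fun j _ => hD.1 i j) (fun j _ => mul_nonneg (hD.1 i j) (sq_nonneg _))
      (fun j _ => by ring)
    rw [sum_row_of_mem_doublyStochastic hD i, one_mul] at this
    simpa [Matrix.mulVec, dotProduct] using this
  calc ∑ i, ((D *ᵥ x) i) ^ 2 ≤ ∑ i, ∑ j, D i j * (x j) ^ 2 :=
        Finset.sum_le_sum fun i _ => h1 i
    _ = ∑ j, (∑ i, D i j) * (x j) ^ 2 := by
        rw [Finset.sum_comm]; simp [Finset.sum_mul]
    _ = ∑ j, (x j) ^ 2 := by
        simp [sum_col_of_mem_doublyStochastic hD]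

lemma eigvec_sum_sq {n : ℕ} {A : Matrix (Fin n) (Fin n) ℝ} (hA : A.IsHermitian) (i : Fin n) :
    ∑ j, (hA.eigenvectorBasis i j) ^ 2 = 1 := by
  have h := hA.eigenvectorBasis.orthonormal.1 i
  rw [EuclideanSpace.norm_eq] at h
  have := Real.sqrt_eq_one.mp h
  simpa [Real.norm_eq_abs, sq_abs] using this

lemma eig_eq_dot {n : ℕ} {A : Matrix (Fin n) (Fin n) ℝ} (hA : A.IsHermitian) (i : Fin n) :
    hA.eigenvalues i = (⇑(hA.eigenvectorBasis i)) ⬝ᵥ (A *ᵥ ⇑(hA.eigenvectorBasis i)) := by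
  have := hA.eigenvalues_eq i
  simpa using this

lemma eig_le_one {n : ℕ} {D : Matrix (Fin n) (Fin n) ℝ}
    (hD : D ∈ doublyStochastic ℝ (Fin n)) (i : Fin n) :
    (Matrix.isHermitian_conjTranspose_mul_self D).eigenvalues i ≤ 1 := by
  set hH := Matrix.isHermitian_conjTranspose_mul_self D
  set v : Fin n → ℝ := ⇑(hH.eigenvectorBasis i) with hv
  have key : hH.eigenvalues i = ∑ k, ((D *ᵥ v) k) ^ 2 := by
    have hDT : Dᴴ = Dᵀ := by ext a b; simp [Matrix.conjTranspose_apply]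
    rw [eig_eq_dot hH i, ← hv, hDT, ← Matrix.mulVec_mulVec, Matrix.dotProduct_mulVec,
      Matrix.vecMul_transpose]
    simp [dotProduct, sq]
  rw [key]
  calc ∑ k, ((D *ᵥ v) k) ^ 2 ≤ ∑ j, (v j) ^ 2 := sum_sq_mulVec_le hD v
    _ = 1 := eigvec_sum_sq hH i

lemma eig_nonneg {n : ℕ} (D : Matrix (Fin n) (Fin n) ℝ) (i : Fin n) :
    0 ≤ (Matrix.isHermitian_conjTranspose_mul_self D).eigenvalues i := by
  have : (Dᵀ * D).PosSemidef := by
    simpa using Matrix.posSemidef_conjTranspose_mul_self D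
  exact this.eigenvalues_nonneg i

lemma sum_eig_eq_trace {n : ℕ} {A : Matrix (Fin n) (Fin n) ℝ} (hA : A.IsHermitian) :
    ∑ i, hA.eigenvalues i = A.trace := by
  rw [hA.trace_eq_sum_eigenvalues]
  simp

lemma permMatrix_apply' {n : ℕ} (σ : Equiv.Perm (Fin n)) (i j : Fin n) :
    (σ.permMatrix ℝ) i j = if σ i = j then 1 else 0 := by
  simp [Equiv.Perm.permMatrix, PEquiv.toMatrix_apply, Equiv.toPEquiv_apply, eq_comm]

lemma isPermMatrix_of_zero_one {n : ℕ} {D : Matrix (Fin n) (Fin n) ℝ}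
    (hD : D ∈ doublyStochastic ℝ (Fin n)) (h01 : ∀ i j, D i j = 0 ∨ D i j = 1) :
    IsPermMatrix D := by
  have hex : ∀ i, ∃ j, D i j = 1 := by
    intro i
    by_contra h
    push_neg at h
    have : ∀ j, D i j = 0 := fun j => (h01 i j).resolve_right (h j)
    have hs := sum_row_of_mem_doublyStochastic hD i
    rw [Finset.sum_eq_zero (fun j _ => this j)] at hs
    norm_num at hs
  choose f hf using hex
  have hinj : Function.Injective f := by
    intro a b hab
    by_contra hne
    have hcol := sum_col_of_mem_doublyStochastic hD (f a)
    have h2 : (2:ℝ) ≤ ∑ i, D i (f a) := by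
      have hsub : ({a, b} : Finset (Fin n)) ⊆ Finset.univ := Finset.subset_univ _
      have : ∑ i ∈ ({a, b} : Finset (Fin n)), D i (f a) = 2 := by
        have hb1 : D b (f a) = 1 := by rw [hab]; exact hf b
        rw [Finset.sum_pair hne, hf a, hb1]; norm_num
      calc (2:ℝ) = ∑ i ∈ ({a, b} : Finset (Fin n)), D i (f a) := this.symm
        _ ≤ ∑ i, D i (f a) :=
          Finset.sum_le_sum_of_subset_of_nonneg hsub (fun i _ _ => hD.1 i (f a))
    rw [hcol] at h2; norm_num at h2
  refine ⟨Equiv.ofBijective f (Finite.injective_iff_bijective.mp hinj), ?_⟩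
  ext i j
  rw [permMatrix_apply']
  simp only [Equiv.ofBijective_apply]
  by_cases hj : f i = j
  · subst hj; simp [hf i]
  · simp only [hj, if_false]
    rcases h01 i j with h | h
    · exact h
    · exfalso
      have hrow := sum_row_of_mem_doublyStochastic hD i
      have h2 : (2:ℝ) ≤ ∑ k, D i k := by
        have hne : j ≠ f i := fun hh => hj hh.symm
        have : ∑ k ∈ ({j, f i} : Finset (Fin n)), D i k = 2 := by
          rw [Finset.sum_pair hne, h, hf i]; norm_num
        calc (2:ℝ) = ∑ k ∈ ({j, f i} : Finset (Fin n)), D i k := this.symm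
          _ ≤ ∑ k, D i k :=
            Finset.sum_le_sum_of_subset_of_nonneg (Finset.subset_univ _)
              (fun k _ _ => hD.1 i k)
      rw [hrow] at h2; norm_num at h2

lemma perm_conjTranspose_mul_self {n : ℕ} (σ : Equiv.Perm (Fin n)) :
    (σ.permMatrix ℝ)ᴴ * (σ.permMatrix ℝ) = 1 := by
  ext j k
  simp only [Matrix.mul_apply, Matrix.conjTranspose_apply, permMatrix_apply', star_trivial]
  rw [Finset.sum_eq_single (σ.symm j)]
  · simp [Equiv.apply_eq_iff_eq_symm_apply, Matrix.one_apply, eq_comm]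
  · intro b _ hb
    have : σ b ≠ j := fun h => hb (by simp [← h])
    simp [this]
  · simp

lemma eigenvalues_congr {n : ℕ} {A B : Matrix (Fin n) (Fin n) ℝ} (h : A = B)
    (hA : A.IsHermitian) (hB : B.IsHermitian) (i : Fin n) :
    hA.eigenvalues i = hB.eigenvalues i := by subst h; rfl

lemma eigenvalues_one {n : ℕ} (i : Fin n) :
    (Matrix.isHermitian_one (n := Fin n) (α := ℝ)).eigenvalues i = 1 := by
  rw [eig_eq_dot, Matrix.one_mulVec]
  have := eigvec_sum_sq (Matrix.isHermitian_one (n := Fin n) (α := ℝ)) i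
  simpa [dotProduct, sq] using this

lemma singularValues_perm {n : ℕ} (σ : Equiv.Perm (Fin n)) (i : Fin n) :
    singularValues (σ.permMatrix ℝ) i = 1 := by
  have h := eigenvalues_congr (perm_conjTranspose_mul_self σ)
    (Matrix.isHermitian_conjTranspose_mul_self (σ.permMatrix ℝ)) Matrix.isHermitian_one i
  simp only [singularValues, h, eigenvalues_one, Real.sqrt_one]

lemma trace_transpose_mul_self {n : ℕ} (D : Matrix (Fin n) (Fin n) ℝ) :
    (Dᴴ * D).trace = ∑ i, ∑ j, (D i j) ^ 2 := by
  rw [Finset.sum_comm]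
  simp [Matrix.trace, Matrix.mul_apply, Matrix.diag, sq, Matrix.conjTranspose_apply]

end Aux

/-- For `1 ≤ p < ∞` and `D` doubly stochastic, `‖D‖_{S_p} ≤ n^{1/p}`,
with equality iff `D` is a permutation matrix. -/
theorem schattenNorm_doublyStochastic_le {n : ℕ} {p : ℝ} (hp : 1 ≤ p)
    (D : Matrix (Fin n) (Fin n) ℝ) (hD : D ∈ doublyStochastic ℝ (Fin n)) :
    schattenNorm p D ≤ (n : ℝ) ^ (1 / p) ∧
      (schattenNorm p D = (n : ℝ) ^ (1 / p) ↔ IsPermMatrix D) := by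
  have hp0 : (0:ℝ) < p := lt_of_lt_of_le zero_lt_one hp
  set lam := (Matrix.isHermitian_conjTranspose_mul_self D).eigenvalues with hlam
  have hσ0 : ∀ i, 0 ≤ singularValues D i := fun i => Real.sqrt_nonneg _
  have hσ1 : ∀ i, singularValues D i ≤ 1 := by
    intro i
    have := eig_le_one hD i
    calc singularValues D i = Real.sqrt (lam i) := rfl
      _ ≤ Real.sqrt 1 := Real.sqrt_le_sqrt this
      _ = 1 := Real.sqrt_one
  have hterm : ∀ i, singularValues D i ^ p ≤ 1 :=
    fun i => Real.rpow_le_one (hσ0 i) (hσ1 i) hp0.le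
  have htermpos : ∀ i, (0:ℝ) ≤ singularValues D i ^ p :=
    fun i => Real.rpow_nonneg (hσ0 i) p
  set S := ∑ i, singularValues D i ^ p with hS
  have hS0 : 0 ≤ S := Finset.sum_nonneg fun i _ => htermpos i
  have hSn : S ≤ n := by
    calc S ≤ ∑ _i : Fin n, (1:ℝ) := Finset.sum_le_sum fun i _ => hterm i
      _ = n := by simp
  have hineq : schattenNorm p D ≤ (n : ℝ) ^ (1 / p) := by
    have := Real.rpow_le_rpow hS0 hSn (by positivity : (0:ℝ) ≤ 1/p)
    simpa [schattenNorm, ← hS] using this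
  refine ⟨hineq, ?_, ?_⟩
  · -- equality → perm matrix
    intro hEq
    have hEq' : S ^ (1/p) = (n:ℝ) ^ (1/p) := by simpa [schattenNorm, ← hS] using hEq
    have hSeqn : S = n := by
      have h1 : (S ^ (1/p)) ^ p = ((n:ℝ) ^ (1/p)) ^ p := by rw [hEq']
      rwa [← Real.rpow_mul hS0, ← Real.rpow_mul (Nat.cast_nonneg n), one_div,
        inv_mul_cancel₀ hp0.ne', Real.rpow_one, Real.rpow_one] at h1
    have hall : ∀ i, singularValues D i ^ p = 1 := by
      by_contra h
      push_neg at h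
      obtain ⟨i0, hi0⟩ := h
      have hlt : singularValues D i0 ^ p < 1 := lt_of_le_of_ne (hterm i0) hi0
      have : S < n := by
        calc S < ∑ _i : Fin n, (1:ℝ) :=
              Finset.sum_lt_sum (fun i _ => hterm i) ⟨i0, Finset.mem_univ _, hlt⟩
          _ = n := by simp
      linarith
    have hsv1 : ∀ i, singularValues D i = 1 := by
      intro i
      have h0 := hσ0 i
      have : (singularValues D i ^ p) ^ (1/p) = singularValues D i := by
        rw [← Real.rpow_mul h0, mul_one_div, div_self hp0.ne', Real.rpow_one]
      rw [← this, hall i, Real.one_rpow]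
    have hlam1 : ∀ i, lam i = 1 := by
      intro i
      exact Real.sqrt_eq_one.mp (hsv1 i)
    have htr : (Dᴴ * D).trace = n := by
      rw [← sum_eig_eq_trace (Matrix.isHermitian_conjTranspose_mul_self D)]
      exact (Finset.sum_congr rfl fun i _ => hlam1 i).trans (by simp)
    have hsumsq : ∑ i, ∑ j, (D i j) ^ 2 = n := by
      rw [← trace_transpose_mul_self]; exact htr
    have hsum1 : ∑ i : Fin n, ∑ j, D i j = n := by
      simp [sum_row_of_mem_doublyStochastic hD]
    have hzero : ∑ i : Fin n, ∑ j, (D i j - (D i j) ^ 2) = 0 := by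
      simp only [Finset.sum_sub_distrib]
      rw [hsumsq, hsum1, sub_self]
    have hnn : ∀ i ∈ Finset.univ, (0:ℝ) ≤ ∑ j, (D i j - (D i j) ^ 2) := by
      intro i _
      refine Finset.sum_nonneg fun j _ => ?_
      have h0 := hD.1 i j
      have h1 := le_one_of_mem_doublyStochastic hD (i := i) (j := j)
      nlinarith
    have h01 : ∀ i j, D i j = 0 ∨ D i j = 1 := by
      intro i j
      have hrow0 := (Finset.sum_eq_zero_iff_of_nonneg hnn).mp hzero i (Finset.mem_univ i)
      have hterm0 : ∀ j' ∈ Finset.univ, (0:ℝ) ≤ D i j' - (D i j') ^ 2 := by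
        intro j' _
        have h0 := hD.1 i j'
        have h1 := le_one_of_mem_doublyStochastic hD (i := i) (j := j')
        nlinarith
      have := (Finset.sum_eq_zero_iff_of_nonneg hterm0).mp hrow0 j (Finset.mem_univ j)
      have hfac : D i j * (1 - D i j) = 0 := by nlinarith
      rcases mul_eq_zero.mp hfac with h | h
      · exact Or.inl h
      · exact Or.inr (by linarith)
    exact isPermMatrix_of_zero_one hD h01
  · -- perm matrix → equality
    rintro ⟨σ, rfl⟩
    simp [schattenNorm, singularValues_perm, Real.one_rpow]
end

section
/- For every n × n doubly stochastic matrix D, the minimal radius r_F(D) = max_{D' ∈ Ω_n} ‖D − D'‖_F of a bounding ball of Ω_n centered at D relative to the Frobenius norm satisfies ( ‖D‖_F² + n − 2 )^{1/2} ≤ r_F(D) ≤ ( ‖D‖_F² + n )^{1/2}. -/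
open Matrix BigOperators Finset

set_option maxHeartbeats 1000000

lemma frobNorm_sq {n : ℕ} (A : Matrix (Fin n) (Fin n) ℝ) :
    frobNorm A ^ 2 = ∑ i, ∑ j, (A i j) ^ 2 := by
  rw [frobNorm, Real.sq_sqrt]
  positivity

lemma perm_fiber_card {n : ℕ} (i j j' : Fin n) :
    (Finset.univ.filter (fun σ : Equiv.Perm (Fin n) => σ i = j)).card =
    (Finset.univ.filter (fun σ : Equiv.Perm (Fin n) => σ i = j')).card := by
  apply Finset.card_equiv (Equiv.mulLeft (Equiv.swap j j'))
  intro σ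
  simp only [mem_filter, mem_univ, true_and, Equiv.coe_mulLeft, Equiv.Perm.mul_apply]
  constructor
  · intro h; rw [h, Equiv.swap_apply_left]
  · intro h
    have := congrArg (Equiv.swap j j') h
    simpa [Equiv.swap_apply_left] using this

lemma perm_fiber_card_mul {n : ℕ} (i j : Fin n) :
    n * (Finset.univ.filter (fun σ : Equiv.Perm (Fin n) => σ i = j)).card =
      Fintype.card (Equiv.Perm (Fin n)) := by
  have h1 : (Finset.univ : Finset (Equiv.Perm (Fin n))).card =
      ∑ j' : Fin n, (Finset.univ.filter (fun σ : Equiv.Perm (Fin n) => σ i = j')).card :=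
    Finset.card_eq_sum_card_fiberwise (t := Finset.univ) (f := fun σ : Equiv.Perm (Fin n) => σ i) (fun x _ => mem_univ _)
  have h2 : Fintype.card (Equiv.Perm (Fin n)) =
      ∑ j' : Fin n, (Finset.univ.filter (fun σ : Equiv.Perm (Fin n) => σ i = j')).card := h1
  rw [h2, Finset.sum_congr rfl (fun j' _ => (perm_fiber_card i j' j)), Finset.sum_const,
    smul_eq_mul, Finset.card_univ, Fintype.card_fin]

lemma sum_perm_tr_le {n : ℕ} (D : Matrix (Fin n) (Fin n) ℝ)
    (h0 : ∀ i j, 0 ≤ D i j) (hrow : ∀ i, ∑ j, D i j = 1) :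
    ∑ σ : Equiv.Perm (Fin n), ∑ i, D i (σ i) ≤ (Fintype.card (Equiv.Perm (Fin n)) : ℝ) := by
  rcases Nat.eq_zero_or_pos n with hn | hn
  · subst hn
    simp
  have hfiber : ∀ i : Fin n, ∑ σ : Equiv.Perm (Fin n), D i (σ i) =
      ∑ j : Fin n,
        ((Finset.univ.filter (fun σ : Equiv.Perm (Fin n) => σ i = j)).card : ℝ) * D i j := by
    intro i
    rw [← Finset.sum_fiberwise_of_maps_to (g := fun σ : Equiv.Perm (Fin n) => σ i)
      (fun (σ : Equiv.Perm (Fin n)) (_ : σ ∈ Finset.univ) => mem_univ (σ i))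
      (fun σ => D i (σ i))]
    refine Finset.sum_congr rfl fun j _ => ?_
    rw [Finset.sum_congr rfl (fun σ hσ => by
      rw [(Finset.mem_filter.1 hσ).2]), Finset.sum_const, nsmul_eq_mul]
  have key : (n : ℝ) * ∑ σ : Equiv.Perm (Fin n), ∑ i, D i (σ i) =
      (Fintype.card (Equiv.Perm (Fin n)) : ℝ) * n := by
    rw [Finset.sum_comm]
    rw [Finset.sum_congr rfl fun i _ => hfiber i]
    rw [Finset.mul_sum]
    have : ∀ i : Fin n, (n : ℝ) * ∑ j : Fin n,
        ((Finset.univ.filter (fun σ : Equiv.Perm (Fin n) => σ i = j)).card : ℝ) * D i j =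
        (Fintype.card (Equiv.Perm (Fin n)) : ℝ) * 1 := by
      intro i
      rw [Finset.mul_sum, ← hrow i, Finset.mul_sum]
      refine Finset.sum_congr rfl fun j _ => ?_
      rw [← mul_assoc, ← Nat.cast_mul, perm_fiber_card_mul i j]
    rw [Finset.sum_congr rfl fun i _ => this i]
    simp [mul_comm]
  have hn' : (0 : ℝ) < n := by exact_mod_cast hn
  nlinarith [key]


/-- For `D` doubly stochastic,
`(‖D‖_F² + n − 2)^{1/2} ≤ r_F(D) ≤ (‖D‖_F² + n)^{1/2}` where
`r_F(D) = max_{D' ∈ Ω_n} ‖D − D'‖_F`. -/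
theorem frob_bounding_radius_bounds {n : ℕ} (D : Matrix (Fin n) (Fin n) ℝ)
    (hD : D ∈ doublyStochastic ℝ (Fin n)) :
    Real.sqrt (frobNorm D ^ 2 + n - 2) ≤
        sSup {r : ℝ | ∃ D' ∈ doublyStochastic ℝ (Fin n), r = frobNorm (D - D')} ∧
      sSup {r : ℝ | ∃ D' ∈ doublyStochastic ℝ (Fin n), r = frobNorm (D - D')} ≤
        Real.sqrt (frobNorm D ^ 2 + n) := by
  set S := {r : ℝ | ∃ D' ∈ doublyStochastic ℝ (Fin n), r = frobNorm (D - D')} with hS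
  -- entries of D
  have hD0 : ∀ i j, 0 ≤ D i j := fun i j => nonneg_of_mem_doublyStochastic hD
  have hDrow : ∀ i, ∑ j, D i j = 1 := sum_row_of_mem_doublyStochastic hD
  -- upper bound for every element of S
  have hub : ∀ r ∈ S, r ≤ Real.sqrt (frobNorm D ^ 2 + n) := by
    rintro r ⟨D', hD', rfl⟩
    -- frobNorm (D - D') ≤ sqrt (frobNorm D ^ 2 + n)
    rw [frobNorm]
    apply Real.sqrt_le_sqrt
    have hstep : ∀ i : Fin n, ∑ j, (D i j - D' i j) ^ 2 ≤ (∑ j, D i j ^ 2) + 1 := by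
      intro i
      have h1 : ∀ j, (D i j - D' i j) ^ 2 ≤ D i j ^ 2 + D' i j := by
        intro j
        have h0 : 0 ≤ D i j := hD0 i j
        have h0' : 0 ≤ D' i j := nonneg_of_mem_doublyStochastic hD'
        have h1' : D' i j ≤ 1 := le_one_of_mem_doublyStochastic hD'
        nlinarith
      calc ∑ j, (D i j - D' i j) ^ 2 ≤ ∑ j, (D i j ^ 2 + D' i j) :=
            Finset.sum_le_sum fun j _ => h1 j
        _ = (∑ j, D i j ^ 2) + 1 := by
            rw [Finset.sum_add_distrib, sum_row_of_mem_doublyStochastic hD' i]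
    calc ∑ i, ∑ j, (D i j - D' i j) ^ 2 ≤ ∑ i : Fin n, ((∑ j, D i j ^ 2) + 1) :=
          Finset.sum_le_sum fun i _ => hstep i
      _ = frobNorm D ^ 2 + n := by
          rw [Finset.sum_add_distrib, frobNorm_sq]
          simp
  have hne : S.Nonempty := ⟨frobNorm (D - D), D, hD, rfl⟩
  have hbdd : BddAbove S := ⟨_, hub⟩
  refine ⟨?_, csSup_le hne hub⟩
  -- lower bound: pick a permutation with small trace
  obtain ⟨σ, -, hσ⟩ := Finset.exists_le_of_sum_le (Finset.univ_nonempty)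
    (by simpa using sum_perm_tr_le D hD0 hDrow :
      ∑ σ : Equiv.Perm (Fin n), ∑ i, D i (σ i) ≤ ∑ _σ : Equiv.Perm (Fin n), (1 : ℝ))
  set P := σ.permMatrix ℝ with hP
  have hPmem : P ∈ doublyStochastic ℝ (Fin n) := permMatrix_mem_doublyStochastic
  have hle : Real.sqrt (frobNorm D ^ 2 + n - 2) ≤ frobNorm (D - P) := by
    rw [frobNorm]
    apply Real.sqrt_le_sqrt
    have hrowP : ∀ i : Fin n, ∑ j, (D i j - P i j) ^ 2 =
        (∑ j, D i j ^ 2) - 2 * D i (σ i) + 1 := by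
      intro i
      have hPij : ∀ j, P i j = if σ i = j then (1:ℝ) else 0 := by
        intro j
        simp [hP, Equiv.Perm.permMatrix, PEquiv.toMatrix_apply, Equiv.toPEquiv]
      have : ∀ j, (D i j - P i j) ^ 2 =
          D i j ^ 2 - 2 * D i j * (if σ i = j then (1:ℝ) else 0)
            + (if σ i = j then (1:ℝ) else 0) := by
        intro j
        rw [hPij j]
        by_cases h : σ i = j <;> simp [h] <;> ring
      rw [Finset.sum_congr rfl fun j _ => this j]
      rw [Finset.sum_add_distrib, Finset.sum_sub_distrib]
      simp [mul_ite]
    calc frobNorm D ^ 2 + n - 2 ≤ frobNorm D ^ 2 + n - 2 * ∑ i, D i (σ i) := by linarith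
      _ = ∑ i, ∑ j, (D i j - P i j) ^ 2 := by
          rw [Finset.sum_congr rfl fun i _ => hrowP i, Finset.sum_add_distrib,
            Finset.sum_sub_distrib, ← Finset.mul_sum, frobNorm_sq]
          simp
          ring
  exact hle.trans (le_csSup hbdd ⟨P, hPmem, rfl⟩)
end

section
/- Let n ≥ 1. For every n × n doubly stochastic matrix D, writing r_F(D) = max_{D' ∈ Ω_n} ‖D − D'‖_F, one has | r_F(D)² / ( ‖D‖_F² + n − 1 ) − 1 | ≤ 1/n. In particular, the ratio r_F(D)²/(‖D‖_F² + n) converges uniformly to 1 as n → ∞. -/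
open Matrix BigOperators

/-- For `n ≥ 1` and `D` doubly stochastic, with
`r_F(D) = max_{D' ∈ Ω_n} ‖D − D'‖_F`, one has
`| r_F(D)² / (‖D‖_F² + n − 1) − 1 | ≤ 1/n`. -/
theorem frob_bounding_radius_ratio {n : ℕ} (hn : 1 ≤ n) (D : Matrix (Fin n) (Fin n) ℝ)
    (hD : D ∈ doublyStochastic ℝ (Fin n)) :
    |sSup {r : ℝ | ∃ D' ∈ doublyStochastic ℝ (Fin n), r = frobNorm (D - D')} ^ 2 /
        (frobNorm D ^ 2 + (n : ℝ) - 1) - 1| ≤ 1 / (n : ℝ) := by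
  haveI : NeZero n := ⟨by omega⟩
  have hDpos : ∀ i j, 0 ≤ D i j := fun i j => nonneg_of_mem_doublyStochastic hD
  have hDrow : ∀ i, ∑ j, D i j = 1 := sum_row_of_mem_doublyStochastic hD
  set K := ∑ i, ∑ j, (D i j) ^ 2 with hKdef
  have hKnonneg : 0 ≤ K := by positivity
  have hnR : (1 : ℝ) ≤ n := by exact_mod_cast hn
  have hn0 : (0 : ℝ) < n := by linarith
  -- K ≥ 1
  have hK1 : 1 ≤ K := by
    have hrow : ∀ i : Fin n, (1 : ℝ) ≤ n * ∑ j, (D i j) ^ 2 := by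
      intro i
      have h := sq_sum_le_card_mul_sum_sq (s := (Finset.univ : Finset (Fin n))) (f := D i)
      simpa [hDrow i, Finset.card_univ] using h
    have h2 : (n : ℝ) ≤ n * K := by
      calc (n : ℝ) = ∑ _i : Fin n, (1 : ℝ) := by simp
      _ ≤ ∑ i, n * ∑ j, (D i j) ^ 2 := Finset.sum_le_sum fun i _ => hrow i
      _ = n * K := by rw [← Finset.mul_sum]
    nlinarith
  set S := {r : ℝ | ∃ D' ∈ doublyStochastic ℝ (Fin n), r = frobNorm (D - D')} with hSdef
  -- upper bound on elements of S
  have hub : ∀ r ∈ S, r ≤ Real.sqrt (K + n) := by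
    rintro r ⟨D', hD', rfl⟩
    have h1 : ∀ i j, 0 ≤ D' i j := fun i j => nonneg_of_mem_doublyStochastic hD'
    have h2 : ∀ i, ∑ j, D' i j = 1 := sum_row_of_mem_doublyStochastic hD'
    apply Real.sqrt_le_sqrt
    have hpt : ∀ i j, ((D - D') i j) ^ 2 ≤ (D i j) ^ 2 + D' i j := by
      intro i j
      have hle1 : D' i j ≤ 1 := by
        have := Finset.single_le_sum (f := D' i) (fun k _ => h1 i k) (Finset.mem_univ j)
        simpa [h2 i] using this
      have := hDpos i j
      have := h1 i j
      simp only [Matrix.sub_apply]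
      nlinarith
    calc ∑ i, ∑ j, ((D - D') i j) ^ 2
        ≤ ∑ i, ∑ j, ((D i j) ^ 2 + D' i j) :=
          Finset.sum_le_sum fun i _ => Finset.sum_le_sum fun j _ => hpt i j
      _ = K + n := by
          simp only [Finset.sum_add_distrib]
          simp [hKdef, h2]
  have hSne : S.Nonempty := ⟨frobNorm (D - D), D, hD, rfl⟩
  have hbdd : BddAbove S := ⟨Real.sqrt (K + n), hub⟩
  set s := sSup S with hs
  have hsle : s ≤ Real.sqrt (K + n) := csSup_le hSne hub
  -- find a good permutation
  have hσ : ∃ σ : Equiv.Perm (Fin n), ∑ i, D i (σ i) ≤ 1 := by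
    have htot : ∑ k : Fin n, ∑ i, D i (i + k) = (n : ℝ) := by
      rw [Finset.sum_comm]
      calc ∑ i : Fin n, ∑ k : Fin n, D i (i + k)
          = ∑ i : Fin n, ∑ j, D i j := by
            refine Finset.sum_congr rfl fun i _ => ?_
            exact Fintype.sum_equiv (Equiv.addLeft i) _ _ fun k => rfl
        _ = n := by simp [hDrow]
    obtain ⟨k, _, hk⟩ := Finset.exists_le_of_sum_le (f := fun k : Fin n => ∑ i, D i (i + k))
      (g := fun _ => (1 : ℝ)) Finset.univ_nonempty (by simp [htot])
    exact ⟨Equiv.addRight k, hk⟩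
  obtain ⟨σ, hσ1⟩ := hσ
  set P := σ.permMatrix ℝ with hPdef
  have hPmem : P ∈ doublyStochastic ℝ (Fin n) := permMatrix_mem_doublyStochastic
  have hPapp : ∀ i j, P i j = if σ i = j then 1 else 0 := by
    intro i j
    simp [hPdef, Equiv.Perm.permMatrix, PEquiv.toMatrix_apply, Equiv.toPEquiv_apply,
      Option.mem_some_iff, eq_comm]
  -- value of the element from P
  have hval : ∑ i, ∑ j, ((D - P) i j) ^ 2 = K + n - 2 * ∑ i, D i (σ i) := by
    have hrowv : ∀ i, ∑ j, ((D - P) i j) ^ 2 = (∑ j, (D i j) ^ 2) + 1 - 2 * D i (σ i) := by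
      intro i
      have : ∀ j, ((D - P) i j) ^ 2 = (D i j) ^ 2 + P i j - 2 * (D i j * P i j) := by
        intro j
        simp only [Matrix.sub_apply, hPapp]
        by_cases h : σ i = j <;> simp [h] <;> ring
      rw [Finset.sum_congr rfl fun j _ => this j]
      have hPr : ∑ j, P i j = 1 := sum_row_of_mem_doublyStochastic hPmem i
      have hPd : ∑ j, D i j * P i j = D i (σ i) := by
        simp [hPapp, mul_ite, Finset.sum_ite_eq]
      rw [Finset.sum_sub_distrib, Finset.sum_add_distrib, hPr, ← Finset.mul_sum, hPd]
    rw [Finset.sum_congr rfl fun i _ => hrowv i]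
    rw [Finset.sum_sub_distrib, Finset.sum_add_distrib, ← Finset.mul_sum]
    simp [hKdef]
  have hmem : frobNorm (D - P) ∈ S := ⟨P, hPmem, rfl⟩
  have hsge : Real.sqrt (K + n - 2 * ∑ i, D i (σ i)) ≤ s := by
    calc Real.sqrt (K + n - 2 * ∑ i, D i (σ i)) = frobNorm (D - P) := by
          rw [frobNorm, hval]
      _ ≤ s := le_csSup hbdd hmem
  have hs0 : 0 ≤ s := le_trans (Real.sqrt_nonneg _) hsge
  have hKn2 : 0 ≤ K + n - 2 := by linarith
  have hup : s ^ 2 ≤ K + n := by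
    have := pow_le_pow_left₀ hs0 hsle 2
    rwa [Real.sq_sqrt (by linarith)] at this
  have hlo : K + n - 2 ≤ s ^ 2 := by
    have h1 : Real.sqrt (K + n - 2) ≤ s := by
      refine le_trans (Real.sqrt_le_sqrt ?_) hsge
      linarith
    have := pow_le_pow_left₀ (Real.sqrt_nonneg _) h1 2
    rwa [Real.sq_sqrt hKn2] at this
  -- conclude
  have hfD : frobNorm D ^ 2 = K := Real.sq_sqrt hKnonneg
  rw [hfD]
  have hden : (n : ℝ) ≤ K + n - 1 := by linarith
  have hden0 : (0 : ℝ) < K + n - 1 := by linarith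
  have habs : |s ^ 2 - (K + n - 1)| ≤ 1 := abs_le.mpr ⟨by linarith, by linarith⟩
  have heq : s ^ 2 / (K + n - 1) - 1 = (s ^ 2 - (K + n - 1)) / (K + n - 1) := by
    field_simp
  rw [heq, abs_div, abs_of_pos hden0]
  rw [div_le_div_iff₀ hden0 hn0]
  nlinarith [abs_nonneg (s ^ 2 - (K + n - 1))]
end

section
/- Let n ≥ 1 and 1 ≤ p < ∞. The Chebyshev radius of the Birkhoff polytope Ω_n relative to the Schatten p-norm with unconstrained center, namely inf over all n × n real matrices A of max_{D ∈ Ω_n} ‖A − D‖_{S_p}, equals (n − 1)^{1/p}, and this infimum is attained at A = J_n, i.e., max_{D ∈ Ω_n} ‖J_n − D‖_{S_p} = (n − 1)^{1/p}. -/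
open Matrix BigOperators

section AUX
open Finset

section basics
variable {n : ℕ} [NeZero n]

def shiftMat (n : ℕ) [NeZero n] (k : Fin n) : Matrix (Fin n) (Fin n) ℝ :=
  Matrix.of fun a b => if a + k = b then 1 else 0

lemma shiftMat_apply (k a b : Fin n) : shiftMat n k a b = if a + k = b then 1 else 0 := rfl

lemma shift_cond_iff (k a b : Fin n) : (a + k = b) ↔ (a = b - k) := by
  constructor
  · intro h; rw [← h]; simp
  · intro h; rw [h]; simp [sub_add_cancel]

lemma ncast_ne : ((n:ℝ)) ≠ 0 := Nat.cast_ne_zero.mpr (NeZero.ne n)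

lemma key_B (k : Fin n) :
    (matJ n - shiftMat n k)ᴴ * (matJ n - shiftMat n k) = 1 - matJ n := by
  ext a b
  simp only [Matrix.conjTranspose_apply, Matrix.mul_apply, Matrix.sub_apply, matJ,
    Matrix.of_apply, shiftMat_apply, star_trivial, Matrix.one_apply]
  simp_rw [shift_cond_iff]
  simp only [sub_mul, mul_sub, mul_ite, ite_mul, mul_one, mul_zero, one_mul, zero_mul,
    Finset.sum_sub_distrib, Finset.sum_const, Finset.card_univ, Fintype.card_fin,
    nsmul_eq_mul, Finset.sum_ite_eq', Finset.mem_univ, if_true]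
  by_cases h : a = b
  · rw [if_pos (by rw [h]), if_pos h]; field_simp; ring
  · have h2 : ¬ (b - k = a - k) := fun hc => h ((sub_left_inj.mp hc).symm)
    rw [if_neg h2, if_neg h]; field_simp; ring
end basics

section more
variable {n : ℕ} [NeZero n]

lemma key_D {D : Matrix (Fin n) (Fin n) ℝ} (hD : D ∈ doublyStochastic ℝ (Fin n)) :
    (matJ n - D)ᴴ * (matJ n - D) = Dᴴ * D - matJ n := by
  ext a b
  simp only [Matrix.conjTranspose_apply, Matrix.mul_apply, Matrix.sub_apply, matJ,
    Matrix.of_apply, star_trivial]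
  have hca := sum_col_of_mem_doublyStochastic hD a
  have hcb := sum_col_of_mem_doublyStochastic hD b
  simp only [sub_mul, mul_sub, Finset.sum_sub_distrib, ← Finset.mul_sum, ← Finset.sum_mul,
    hca, hcb, Finset.sum_const, Finset.card_univ, Fintype.card_fin, nsmul_eq_mul]
  field_simp
  ring

lemma isHerm_J : (matJ n).IsHermitian := by
  show (matJ n)ᴴ = matJ n
  ext a b
  simp [Matrix.conjTranspose_apply, matJ]

lemma isHerm_N : (1 - matJ n : Matrix (Fin n) (Fin n) ℝ).IsHermitian :=
  Matrix.isHermitian_one.sub isHerm_J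

lemma J_mul_J : matJ n * matJ n = matJ n := by
  ext a b
  simp only [Matrix.mul_apply, matJ, Matrix.of_apply, Finset.sum_const, Finset.card_univ,
    Fintype.card_fin, nsmul_eq_mul]
  field_simp

lemma idem_N : (1 - matJ n : Matrix (Fin n) (Fin n) ℝ) * (1 - matJ n) = 1 - matJ n := by
  rw [sub_mul, one_mul, mul_sub, mul_one, J_mul_J]
  abel

end more

set_option linter.unusedSectionVars false
section complete
variable {n : ℕ}

lemma inner_of_complete (V : Matrix (Fin n) (Fin n) ℝ)
    (hV : ∀ a b, ∑ i, V a i * V b i = if a = b then (1:ℝ) else 0) (x y : Fin n → ℝ) :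
    ∑ i, (∑ a, x a * V a i) * (∑ b, y b * V b i) = ∑ a, x a * y a := by
  have h1 : ∀ i, (∑ a, x a * V a i) * (∑ b, y b * V b i)
      = ∑ a, ∑ b, (x a * y b) * (V a i * V b i) := by
    intro i; rw [Finset.sum_mul_sum]
    exact Finset.sum_congr rfl fun a _ => Finset.sum_congr rfl fun b _ => by ring
  simp_rw [h1]
  rw [Finset.sum_comm]
  have h2 : ∀ a, ∑ i, ∑ b, (x a * y b) * (V a i * V b i) = x a * y a := by
    intro a
    rw [Finset.sum_comm]
    have h3 : ∀ b, ∑ i, (x a * y b) * (V a i * V b i) = (x a * y b) * if a = b then 1 else 0 := by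
      intro b; rw [← Finset.mul_sum, hV a b]
    simp_rw [h3]
    simp [Finset.sum_ite_eq]
  simp_rw [h2]

/-- key representation: sum over ONB of ⟨X v_i, B v_i⟩ equals entrywise sum -/
lemma sum_dot_eq (V : Matrix (Fin n) (Fin n) ℝ)
    (hV : ∀ a b, ∑ i, V a i * V b i = if a = b then (1:ℝ) else 0)
    (X B : Matrix (Fin n) (Fin n) ℝ) :
    ∑ i, (X *ᵥ fun a => V a i) ⬝ᵥ (B *ᵥ fun a => V a i) = ∑ c, ∑ a, X c a * B c a := by
  have h1 : ∀ i, (X *ᵥ fun a => V a i) ⬝ᵥ (B *ᵥ fun a => V a i)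
      = ∑ c, (∑ a, X c a * V a i) * (∑ b, B c b * V b i) := by
    intro i; simp [Matrix.mulVec, dotProduct]
  simp_rw [h1]
  rw [Finset.sum_comm]
  exact Finset.sum_congr rfl fun c _ => inner_of_complete V hV _ _

end complete

section spec
variable {n : ℕ} {M : Matrix (Fin n) (Fin n) ℝ} (hM : M.IsHermitian)

noncomputable def eigCol (hM : M.IsHermitian) (i : Fin n) : Fin n → ℝ :=
  fun a => (hM.eigenvectorUnitary : Matrix (Fin n) (Fin n) ℝ) a i

lemma eigCol_eq (i : Fin n) : eigCol hM i = ⇑(hM.eigenvectorBasis i) :=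
  funext fun a => hM.eigenvectorUnitary_apply a i

lemma mulVec_eigCol (i : Fin n) : M *ᵥ eigCol hM i = hM.eigenvalues i • eigCol hM i := by
  rw [eigCol_eq]; exact hM.mulVec_eigenvectorBasis i

lemma eigCol_dot (i j : Fin n) : eigCol hM i ⬝ᵥ eigCol hM j = if i = j then (1:ℝ) else 0 := by
  have h := Unitary.coe_star_mul_self hM.eigenvectorUnitary
  have h2 := Matrix.ext_iff.mpr h i j
  simpa [Matrix.mul_apply, Matrix.star_apply, Matrix.one_apply, dotProduct, eigCol_eq] using h2

lemma eigCol_complete (a b : Fin n) :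
    ∑ i, eigCol hM i a * eigCol hM i b = if a = b then (1:ℝ) else 0 := by
  have h := Unitary.coe_mul_star_self hM.eigenvectorUnitary
  have h2 := Matrix.ext_iff.mpr h a b
  simpa [Matrix.mul_apply, Matrix.star_apply, Matrix.one_apply, eigCol] using h2

lemma rayleigh_eigCol (i : Fin n) : eigCol hM i ⬝ᵥ (M *ᵥ eigCol hM i) = hM.eigenvalues i := by
  rw [mulVec_eigCol, dotProduct_smul, eigCol_dot, smul_eq_mul, if_pos rfl, mul_one]

/-- trace equals sum of eigenvalues (real Hermitian) -/
lemma sum_eig_eq_trace_s10 : ∑ i, hM.eigenvalues i = ∑ c, M c c := by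
  have h := sum_dot_eq (Matrix.of fun a i => eigCol hM i a)
    (fun a b => eigCol_complete hM a b) 1 M
  simp only [Matrix.of_apply] at h
  have h2 : ∀ i, ((1:Matrix (Fin n) (Fin n) ℝ) *ᵥ fun a => eigCol hM i a)
      ⬝ᵥ (M *ᵥ fun a => eigCol hM i a) = hM.eigenvalues i := by
    intro i
    rw [show (fun a => eigCol hM i a) = eigCol hM i from rfl, Matrix.one_mulVec,
      rayleigh_eigCol]
  calc ∑ i, hM.eigenvalues i
      = ∑ i, ((1:Matrix (Fin n) (Fin n) ℝ) *ᵥ fun a => eigCol hM i a)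
          ⬝ᵥ (M *ᵥ fun a => eigCol hM i a) := Finset.sum_congr rfl fun i _ => (h2 i).symm
    _ = ∑ c, ∑ a, (1:Matrix (Fin n) (Fin n) ℝ) c a * M c a := h
    _ = ∑ c, M c c := by
        refine Finset.sum_congr rfl fun c _ => ?_
        simp [Matrix.one_apply]

/-- entrywise spectral decomposition -/
lemma spectral_entry (a b : Fin n) :
    M a b = ∑ j, hM.eigenvalues j * eigCol hM j a * eigCol hM j b := by
  have h1 : ∀ j, hM.eigenvalues j * eigCol hM j a = (M *ᵥ eigCol hM j) a := by
    intro j; rw [mulVec_eigCol]; rfl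
  calc M a b = ∑ c, M a c * (if c = b then (1:ℝ) else 0) := by simp
    _ = ∑ c, M a c * ∑ j, eigCol hM j c * eigCol hM j b := by
        refine Finset.sum_congr rfl fun c _ => ?_; rw [eigCol_complete hM c b]
    _ = ∑ j, hM.eigenvalues j * eigCol hM j a * eigCol hM j b := by
        simp_rw [Finset.mul_sum]
        rw [Finset.sum_comm]
        refine Finset.sum_congr rfl fun j _ => ?_
        have h2 : ∑ c, M a c * (eigCol hM j c * eigCol hM j b)
            = (M *ᵥ eigCol hM j) a * eigCol hM j b := by
          rw [Matrix.mulVec, dotProduct, Finset.sum_mul]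
          exact Finset.sum_congr rfl fun c _ => by ring
        rw [h2, mulVec_eigCol]
        simp [mul_assoc]

end spec

section eigN
variable {n : ℕ} [NeZero n]

lemma eig_congr {M M' : Matrix (Fin n) (Fin n) ℝ} (h : M = M')
    (hM : M.IsHermitian) (hM' : M'.IsHermitian) : hM.eigenvalues = hM'.eigenvalues := by
  subst h; rfl

lemma eigN_01 (hN : (1 - matJ n : Matrix (Fin n) (Fin n) ℝ).IsHermitian) (i : Fin n) :
    hN.eigenvalues i = 0 ∨ hN.eigenvalues i = 1 := by
  set N : Matrix (Fin n) (Fin n) ℝ := 1 - matJ n with hNdef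
  set v := eigCol hN i with hv
  have e1 : N *ᵥ (N *ᵥ v) = (hN.eigenvalues i * hN.eigenvalues i) • v := by
    rw [hv, mulVec_eigCol, Matrix.mulVec_smul, mulVec_eigCol, smul_smul]
  have e2 : N *ᵥ (N *ᵥ v) = hN.eigenvalues i • v := by
    rw [Matrix.mulVec_mulVec, idem_N, hv, mulVec_eigCol]
  have e3 := congrArg (fun w => v ⬝ᵥ w) (e1.symm.trans e2)
  simp only [dotProduct_smul, hv, eigCol_dot, if_pos rfl, smul_eq_mul, mul_one,
    if_true] at e3
  by_cases hz : hN.eigenvalues i = 0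
  · exact Or.inl hz
  · refine Or.inr (mul_left_cancel₀ hz ?_)
    rw [mul_one]
    exact e3

lemma eigN_sum (hN : (1 - matJ n : Matrix (Fin n) (Fin n) ℝ).IsHermitian) :
    ∑ i, hN.eigenvalues i = (n : ℝ) - 1 := by
  rw [sum_eig_eq_trace_s10 hN]
  have : ∀ c : Fin n, (1 - matJ n : Matrix (Fin n) (Fin n) ℝ) c c = 1 - (n:ℝ)⁻¹ := by
    intro c; simp [Matrix.sub_apply, Matrix.one_apply, matJ]
  simp only [this, Finset.sum_const, Finset.card_univ, Fintype.card_fin, nsmul_eq_mul]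
  have h0 : (n:ℝ) ≠ 0 := ncast_ne
  field_simp

end eigN

section tools
variable {n : ℕ}

lemma star_vec (w : Fin n → ℝ) : star w = w := funext fun a => rfl

lemma dot_XtX (X : Matrix (Fin n) (Fin n) ℝ) (w : Fin n → ℝ) :
    w ⬝ᵥ ((Xᴴ * X) *ᵥ w) = (X *ᵥ w) ⬝ᵥ (X *ᵥ w) := by
  rw [← Matrix.mulVec_mulVec, Matrix.dotProduct_mulVec, Matrix.vecMul_conjTranspose,
    star_vec, star_vec]

lemma dot_self_nonneg (w : Fin n → ℝ) : 0 ≤ w ⬝ᵥ w :=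
  Finset.sum_nonneg fun i _ => mul_self_nonneg _

lemma J_quad (v : Fin n → ℝ) : v ⬝ᵥ (matJ n *ᵥ v) = (∑ a, v a)^2 * (n:ℝ)⁻¹ := by
  have h1 : ∀ a, (matJ n *ᵥ v) a = (n:ℝ)⁻¹ * ∑ b, v b := by
    intro a
    simp [Matrix.mulVec, dotProduct, matJ, Finset.mul_sum]
  simp only [dotProduct, h1]
  rw [← Finset.sum_mul]
  ring

lemma J_quad_nonneg [NeZero n] (v : Fin n → ℝ) : 0 ≤ v ⬝ᵥ (matJ n *ᵥ v) := by
  rw [J_quad]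
  positivity

lemma DS_contraction {D : Matrix (Fin n) (Fin n) ℝ} (hD : D ∈ doublyStochastic ℝ (Fin n))
    (v : Fin n → ℝ) : (D *ᵥ v) ⬝ᵥ (D *ᵥ v) ≤ v ⬝ᵥ v := by
  have key : ∀ i, (∑ j, D i j * v j)^2 ≤ ∑ j, D i j * (v j)^2 := by
    intro i
    have hcs := Finset.sum_mul_sq_le_sq_mul_sq Finset.univ
      (fun j => Real.sqrt (D i j)) (fun j => Real.sqrt (D i j) * v j)
    have e1 : ∀ j, Real.sqrt (D i j) * (Real.sqrt (D i j) * v j) = D i j * v j := by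
      intro j; rw [← mul_assoc, Real.mul_self_sqrt (nonneg_of_mem_doublyStochastic hD)]
    have e2 : ∀ j, Real.sqrt (D i j) ^ 2 = D i j := fun j =>
      Real.sq_sqrt (nonneg_of_mem_doublyStochastic hD)
    have e3 : ∀ j, (Real.sqrt (D i j) * v j) ^ 2 = D i j * (v j)^2 := by
      intro j; rw [mul_pow, e2]
    simp only [e1, e2, e3] at hcs
    rwa [sum_row_of_mem_doublyStochastic hD i, one_mul] at hcs
  calc (D *ᵥ v) ⬝ᵥ (D *ᵥ v) = ∑ i, (∑ j, D i j * v j)^2 := by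
        simp [dotProduct, Matrix.mulVec, sq]
    _ ≤ ∑ i, ∑ j, D i j * (v j)^2 := Finset.sum_le_sum fun i _ => key i
    _ = ∑ j, (∑ i, D i j) * (v j)^2 := by rw [Finset.sum_comm]; simp [Finset.sum_mul]
    _ = v ⬝ᵥ v := by
        simp only [fun j => sum_col_of_mem_doublyStochastic hD j, one_mul]
        simp [dotProduct, sq]
end tools

section values
variable {n : ℕ} [NeZero n] {p : ℝ}

lemma sv_def (A : Matrix (Fin n) (Fin n) ℝ) (i : Fin n) :
    singularValues A i = Real.sqrt ((Matrix.isHermitian_conjTranspose_mul_self A).eigenvalues i) := rfl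

lemma schatten_B (hp : 1 ≤ p) (k : Fin n) :
    schattenNorm p (matJ n - shiftMat n k) = ((n:ℝ) - 1) ^ (1/p) := by
  have hp0 : (0:ℝ) < p := zero_lt_one.trans_le hp
  have key : ∀ i : Fin n, singularValues (matJ n - shiftMat n k) i ^ p
      = (isHerm_N (n:=n)).eigenvalues i := by
    intro i
    rw [sv_def, eig_congr (key_B k) _ isHerm_N]
    rcases eigN_01 isHerm_N i with h | h <;> rw [h]
    · rw [Real.sqrt_zero, Real.zero_rpow hp0.ne']
    · rw [Real.sqrt_one, Real.one_rpow]
  unfold schattenNorm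
  rw [Finset.sum_congr rfl fun i _ => key i, eigN_sum]

lemma schatten_le (hp : 1 ≤ p) {D : Matrix (Fin n) (Fin n) ℝ}
    (hD : D ∈ doublyStochastic ℝ (Fin n)) :
    schattenNorm p (matJ n - D) ≤ ((n:ℝ) - 1) ^ (1/p) := by
  have hp0 : (0:ℝ) < p := zero_lt_one.trans_le hp
  set X := matJ n - D with hX
  have hM := Matrix.isHermitian_conjTranspose_mul_self X
  have hnn : ∀ i, 0 ≤ hM.eigenvalues i := fun i =>
    Matrix.eigenvalues_conjTranspose_mul_self_nonneg X i
  have hle : ∀ i, hM.eigenvalues i ≤ 1 := by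
    intro i
    have hr := rayleigh_eigCol hM i
    set v := eigCol hM i with hv
    have hvv : v ⬝ᵥ v = 1 := by rw [hv, eigCol_dot]; simp
    have e1 : (Xᴴ * X) *ᵥ v = (Dᴴ * D) *ᵥ v - matJ n *ᵥ v := by
      rw [hX, key_D hD, Matrix.sub_mulVec]
    rw [← hr, e1, dotProduct_sub, dot_XtX]
    have h2 := DS_contraction hD v
    rw [hvv] at h2
    linarith [J_quad_nonneg (n:=n) v]
  obtain ⟨i0, hi0⟩ : ∃ i0, hM.eigenvalues i0 = 0 := by
    have hones : X *ᵥ (fun _ => (1:ℝ)) = 0 := by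
      funext a
      have hra := sum_row_of_mem_doublyStochastic hD a
      show (X *ᵥ fun _ => (1:ℝ)) a = 0
      have e : (X *ᵥ fun _ => (1:ℝ)) a = ∑ x, (matJ n a x - D a x) := by
        simp [hX, Matrix.mulVec, dotProduct, Matrix.sub_apply]
      rw [e, Finset.sum_sub_distrib, hra]
      simp only [matJ, Matrix.of_apply, Finset.sum_const, Finset.card_univ,
        Fintype.card_fin, nsmul_eq_mul]
      rw [mul_inv_cancel₀ (ncast_ne (n:=n))]
      ring
    have hdetX : X.det = 0 := by
      rw [← Matrix.exists_mulVec_eq_zero_iff]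
      refine ⟨fun _ => 1, fun h => ?_, hones⟩
      have := congrFun h (0 : Fin n)
      simp at this
    have hdetM : (Xᴴ * X).det = 0 := by
      rw [Matrix.det_mul, hdetX, mul_zero]
    have hprod := hM.det_eq_prod_eigenvalues
    rw [hdetM] at hprod
    obtain ⟨i0, _, h0⟩ := Finset.prod_eq_zero_iff.mp hprod.symm
    exact ⟨i0, by exact_mod_cast h0⟩
  have hsv1 : ∀ i, singularValues X i ≤ 1 := fun i => by
    rw [sv_def]
    exact Real.sqrt_le_one.mpr (hle i)
  have hsv0 : ∀ i, 0 ≤ singularValues X i := fun i => Real.sqrt_nonneg _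
  have hbound : ∑ i, singularValues X i ^ p ≤ (n:ℝ) - 1 := by
    have h1 : singularValues X i0 ^ p = 0 := by
      rw [sv_def, hi0, Real.sqrt_zero, Real.zero_rpow hp0.ne']
    calc ∑ i, singularValues X i ^ p
        = ∑ i ∈ Finset.univ.erase i0, singularValues X i ^ p := by
          rw [← Finset.sum_erase_add _ _ (Finset.mem_univ i0), h1, add_zero]
      _ ≤ ∑ i ∈ Finset.univ.erase i0, 1 :=
          Finset.sum_le_sum fun i _ => Real.rpow_le_one (hsv0 i) (hsv1 i) hp0.le
      _ = ((n:ℝ) - 1) := by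
          rw [Finset.sum_const, Finset.card_erase_of_mem (Finset.mem_univ i0),
            Finset.card_univ, Fintype.card_fin, nsmul_eq_mul, mul_one,
            Nat.cast_sub (Nat.one_le_iff_ne_zero.mpr (NeZero.ne n)), Nat.cast_one]
  unfold schattenNorm
  exact Real.rpow_le_rpow (Finset.sum_nonneg fun i _ => Real.rpow_nonneg (hsv0 i) p)
    hbound (by positivity)

end values

section lower
variable {n : ℕ} [NeZero n]

lemma shift_cond_iff' (k c a : Fin n) : (c + k = a) ↔ (k = a - c) := by
  rw [add_comm]; exact shift_cond_iff c k a

lemma dot_le_sqrt (f g : Fin n → ℝ) :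
    f ⬝ᵥ g ≤ Real.sqrt (f ⬝ᵥ f) * Real.sqrt (g ⬝ᵥ g) := by
  have h := Real.sum_mul_le_sqrt_mul_sqrt Finset.univ f g
  simpa [dotProduct, sq] using h

lemma exists_good_shift (A : Matrix (Fin n) (Fin n) ℝ) :
    ∃ k : Fin n, ((n:ℝ) - 1) ≤
      ∑ c, ∑ a, (A c a - shiftMat n k c a) * (matJ n c a - shiftMat n k c a) := by
  have point : ∀ c a : Fin n,
      ∑ k : Fin n, (A c a - shiftMat n k c a) * (matJ n c a - shiftMat n k c a)
      = 1 - (n:ℝ)⁻¹ := by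
    intro c a
    have hterm : ∀ k : Fin n, (A c a - shiftMat n k c a) * (matJ n c a - shiftMat n k c a)
        = A c a * (n:ℝ)⁻¹ + if k = a - c then (1 - A c a - (n:ℝ)⁻¹) else 0 := by
      intro k
      rw [shiftMat_apply]
      simp only [shift_cond_iff' k c a, matJ, Matrix.of_apply]
      split_ifs with h <;> ring
    rw [Finset.sum_congr rfl fun k _ => hterm k, Finset.sum_add_distrib, Finset.sum_const,
      Finset.card_univ, Fintype.card_fin, nsmul_eq_mul, Finset.sum_ite_eq',
      if_pos (Finset.mem_univ _)]
    have h0 : (n:ℝ) ≠ 0 := ncast_ne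
    field_simp
    ring
  by_contra hcon
  push_neg at hcon
  have hne : (Finset.univ : Finset (Fin n)).Nonempty := Finset.univ_nonempty
  have hsum := Finset.sum_lt_sum_of_nonempty hne (fun k _ => hcon k)
  have hswap : ∑ k : Fin n, ∑ c, ∑ a,
        (A c a - shiftMat n k c a) * (matJ n c a - shiftMat n k c a)
      = (n:ℝ) * ((n:ℝ) - 1) := by
    rw [Finset.sum_comm]
    have h1 : ∀ c : Fin n, ∑ k : Fin n, ∑ a,
        (A c a - shiftMat n k c a) * (matJ n c a - shiftMat n k c a)
        = ∑ a : Fin n, (1 - (n:ℝ)⁻¹) := by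
      intro c; rw [Finset.sum_comm]
      exact Finset.sum_congr rfl fun a _ => point c a
    rw [Finset.sum_congr rfl fun c _ => h1 c]
    simp only [Finset.sum_const, Finset.card_univ, Fintype.card_fin, nsmul_eq_mul]
    have h0 : (n:ℝ) ≠ 0 := ncast_ne
    field_simp
  rw [hswap, Finset.sum_const, Finset.card_univ, Fintype.card_fin, nsmul_eq_mul] at hsum
  exact lt_irrefl _ hsum

lemma sum_B_sq (k : Fin n) :
    ∑ c, ∑ a, (matJ n - shiftMat n k) c a * (matJ n - shiftMat n k) c a = (n:ℝ) - 1 := by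
  set B := matJ n - shiftMat n k with hB
  calc ∑ c, ∑ a, B c a * B c a = ∑ a, ∑ c, B c a * B c a := Finset.sum_comm
    _ = ∑ a, (Bᴴ * B) a a := by
        refine Finset.sum_congr rfl fun a _ => ?_
        rw [Matrix.mul_apply]
        exact Finset.sum_congr rfl fun c _ => by rw [Matrix.conjTranspose_apply, star_trivial]
    _ = ∑ a, (1 - matJ n : Matrix (Fin n) (Fin n) ℝ) a a := by rw [hB, key_B k]
    _ = (n:ℝ) - 1 := by
        have : ∀ c : Fin n, (1 - matJ n : Matrix (Fin n) (Fin n) ℝ) c c = 1 - (n:ℝ)⁻¹ := by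
          intro c; simp [Matrix.sub_apply, Matrix.one_apply, matJ]
        simp only [this, Finset.sum_const, Finset.card_univ, Fintype.card_fin, nsmul_eq_mul]
        have h0 : (n:ℝ) ≠ 0 := ncast_ne
        field_simp

lemma rpow_cancel {c s : ℝ} {p q : ℝ} (hc : 0 ≤ c) (hs : 0 ≤ s) (hp : 0 < p) (hq : 0 < q)
    (hpq : 1/p + 1/q = 1) (h : c ≤ s * c ^ (1/q)) : c ^ (1/p) ≤ s := by
  rcases eq_or_lt_of_le hc with hc0 | hc0
  · rw [← hc0, Real.zero_rpow (by positivity)]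
    exact hs
  · have key : c ^ (1/p) * c ^ (1/q) = c := by
      rw [← Real.rpow_add hc0, hpq, Real.rpow_one]
    have h2 : c ^ (1/p) * c ^ (1/q) ≤ s * c ^ (1/q) := by rw [key]; exact h
    exact le_of_mul_le_mul_right h2 (Real.rpow_pos_of_pos hc0 _)

end lower

section lower2
variable {n : ℕ} [NeZero n]

lemma quad_expand {M : Matrix (Fin n) (Fin n) ℝ} (hM : M.IsHermitian) (w : Fin n → ℝ) :
    w ⬝ᵥ (M *ᵥ w) = ∑ j, hM.eigenvalues j * (eigCol hM j ⬝ᵥ w)^2 := by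
  have hMv : ∀ a, (M *ᵥ w) a = ∑ j, hM.eigenvalues j * eigCol hM j a * (eigCol hM j ⬝ᵥ w) := by
    intro a
    calc (M *ᵥ w) a = ∑ b, M a b * w b := rfl
      _ = ∑ b, (∑ j, hM.eigenvalues j * eigCol hM j a * eigCol hM j b) * w b :=
          Finset.sum_congr rfl fun b _ => by rw [← spectral_entry hM a b]
      _ = ∑ j, hM.eigenvalues j * eigCol hM j a * (eigCol hM j ⬝ᵥ w) := by
          simp_rw [Finset.sum_mul]
          rw [Finset.sum_comm]
          refine Finset.sum_congr rfl fun j _ => ?_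
          rw [dotProduct, Finset.mul_sum]
          exact Finset.sum_congr rfl fun b _ => by ring
  calc w ⬝ᵥ (M *ᵥ w) = ∑ a, w a * (M *ᵥ w) a := rfl
    _ = ∑ a, ∑ j, hM.eigenvalues j * (eigCol hM j a * w a) * (eigCol hM j ⬝ᵥ w) := by
        refine Finset.sum_congr rfl fun a _ => ?_
        rw [hMv a, Finset.mul_sum]
        exact Finset.sum_congr rfl fun j _ => by ring
    _ = ∑ j, hM.eigenvalues j * (eigCol hM j ⬝ᵥ w)^2 := by
        rw [Finset.sum_comm]
        refine Finset.sum_congr rfl fun j _ => ?_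
        have e : ∑ a, hM.eigenvalues j * (eigCol hM j a * w a) * (eigCol hM j ⬝ᵥ w)
            = (hM.eigenvalues j * (eigCol hM j ⬝ᵥ w)) * (∑ a, eigCol hM j a * w a) := by
          rw [Finset.mul_sum]
          exact Finset.sum_congr rfl fun a _ => by ring
        rw [e, show (∑ a, eigCol hM j a * w a) = eigCol hM j ⬝ᵥ w from rfl]
        ring

lemma sq_dot_sum_left {M : Matrix (Fin n) (Fin n) ℝ} (hM : M.IsHermitian) (w : Fin n → ℝ) :
    ∑ j, (eigCol hM j ⬝ᵥ w)^2 = w ⬝ᵥ w := by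
  have h := inner_of_complete (Matrix.of fun a j => eigCol hM j a)
    (fun a b => eigCol_complete hM a b) w w
  simp only [Matrix.of_apply] at h
  rw [show w ⬝ᵥ w = ∑ a, w a * w a from rfl, ← h]
  refine Finset.sum_congr rfl fun j _ => ?_
  have e : eigCol hM j ⬝ᵥ w = ∑ a, w a * eigCol hM j a := by
    rw [dotProduct]
    exact Finset.sum_congr rfl fun a _ => mul_comm _ _
  rw [e, sq]

end lower2

section master
variable {n : ℕ} [NeZero n] {p : ℝ}

lemma schatten_lower (hp : 1 ≤ p) (A : Matrix (Fin n) (Fin n) ℝ) :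
    ∃ k : Fin n, ((n:ℝ) - 1) ^ (1/p) ≤ schattenNorm p (A - shiftMat n k) := by
  have hp0 : (0:ℝ) < p := zero_lt_one.trans_le hp
  have hn1 : (0:ℝ) ≤ (n:ℝ) - 1 := by
    have h1 : (1:ℝ) ≤ (n:ℝ) := by
      exact_mod_cast Nat.one_le_iff_ne_zero.mpr (NeZero.ne n)
    linarith
  obtain ⟨k, hk⟩ := exists_good_shift A
  refine ⟨k, ?_⟩
  set X : Matrix (Fin n) (Fin n) ℝ := A - shiftMat n k with hX
  set B : Matrix (Fin n) (Fin n) ℝ := matJ n - shiftMat n k with hB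
  have hBtB : Bᴴ * B = 1 - matJ n := by rw [hB]; exact key_B k
  have hM := Matrix.isHermitian_conjTranspose_mul_self X
  have hXB : ((n:ℝ) - 1) ≤ ∑ c, ∑ a, X c a * B c a := by
    have : ∀ c a : Fin n, X c a * B c a
        = (A c a - shiftMat n k c a) * (matJ n c a - shiftMat n k c a) := by
      intro c a; rw [hX, hB]; rfl
    rw [Finset.sum_congr rfl fun c _ => Finset.sum_congr rfl fun a _ => this c a]
    exact hk
  set S := ∑ i, singularValues X i ^ p with hSdef
  have hS0 : (0:ℝ) ≤ S :=
    Finset.sum_nonneg fun i _ => Real.rpow_nonneg (Real.sqrt_nonneg _) p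
  show ((n:ℝ) - 1) ^ (1/p) ≤ S ^ (1/p)
  have hμ0 : ∀ j, 0 ≤ hM.eigenvalues j :=
    Matrix.eigenvalues_conjTranspose_mul_self_nonneg X
  -- facts about the basis u := eigCol hM
  have husum : ((n:ℝ) - 1) ≤ ∑ i, (X *ᵥ eigCol hM i) ⬝ᵥ (B *ᵥ eigCol hM i) := by
    have h := sum_dot_eq (Matrix.of fun a i => eigCol hM i a)
      (fun a b => eigCol_complete hM a b) X B
    exact hXB.trans_eq h.symm
  have haX : ∀ i, Real.sqrt ((X *ᵥ eigCol hM i) ⬝ᵥ (X *ᵥ eigCol hM i)) = singularValues X i := by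
    intro i
    rw [← dot_XtX X (eigCol hM i), rayleigh_eigCol hM i, sv_def]
  have hbB0 : ∀ i, (0:ℝ) ≤ (B *ᵥ eigCol hM i) ⬝ᵥ (B *ᵥ eigCol hM i) :=
    fun i => dot_self_nonneg _
  have hbB : ∀ i, (B *ᵥ eigCol hM i) ⬝ᵥ (B *ᵥ eigCol hM i) ≤ 1 := by
    intro i
    rw [← dot_XtX B (eigCol hM i), hBtB, Matrix.sub_mulVec, dotProduct_sub,
      Matrix.one_mulVec, eigCol_dot hM i i, if_pos rfl]
    have := J_quad_nonneg (n := n) (eigCol hM i)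
    linarith
  rcases eq_or_lt_of_le hp with hp1 | hp1
  · -- p = 1
    have hchain : (n:ℝ) - 1 ≤ ∑ i, singularValues X i := by
      refine le_trans husum (Finset.sum_le_sum fun i _ => ?_)
      calc (X *ᵥ eigCol hM i) ⬝ᵥ (B *ᵥ eigCol hM i)
          ≤ Real.sqrt ((X *ᵥ eigCol hM i) ⬝ᵥ (X *ᵥ eigCol hM i)) *
            Real.sqrt ((B *ᵥ eigCol hM i) ⬝ᵥ (B *ᵥ eigCol hM i)) := dot_le_sqrt _ _
        _ ≤ singularValues X i * 1 := by
            rw [haX i]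
            exact mul_le_mul_of_nonneg_left (Real.sqrt_le_one.mpr (hbB i))
              (Real.sqrt_nonneg _)
        _ = singularValues X i := mul_one _
    have hSeq : S = ∑ i, singularValues X i := by
      rw [hSdef, ← hp1]
      exact Finset.sum_congr rfl fun i _ => Real.rpow_one _
    rw [← hp1, show (1:ℝ)/1 = 1 by norm_num, Real.rpow_one, Real.rpow_one, hSeq]
    exact hchain
  · -- 1 < p
    have hpq := Real.HolderConjugate.conjExponent hp1
    set q := Real.conjExponent p with hq
    have hq0 : (0:ℝ) < q := hpq.symm.pos
    have hpq1 : 1/p + 1/q = 1 := by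
      rw [one_div, one_div]; exact hpq.inv_add_inv_eq_one
    rcases le_total p 2 with hple | hpge
    · -- 1 < p ≤ 2, q ≥ 2
      have hq2 : (2:ℝ) ≤ q := by
        rw [hq, Real.conjExponent, le_div_iff₀ (by linarith : (0:ℝ) < p - 1)]
        linarith
      set b := fun i => Real.sqrt ((B *ᵥ eigCol hM i) ⬝ᵥ (B *ᵥ eigCol hM i)) with hbdef
      have hb0 : ∀ i, 0 ≤ b i := fun i => Real.sqrt_nonneg _
      have hb1 : ∀ i, b i ≤ 1 := fun i => Real.sqrt_le_one.mpr (hbB i)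
      have hbsum2 : ∑ i, b i ^ (2:ℝ) = (n:ℝ) - 1 := by
        have e : ∀ i, b i ^ (2:ℝ) = (B *ᵥ eigCol hM i) ⬝ᵥ (B *ᵥ eigCol hM i) := by
          intro i
          show Real.sqrt ((B *ᵥ eigCol hM i) ⬝ᵥ (B *ᵥ eigCol hM i)) ^ (2:ℝ)
              = (B *ᵥ eigCol hM i) ⬝ᵥ (B *ᵥ eigCol hM i)
          rw [show (2:ℝ) = ((2:ℕ):ℝ) by norm_num, Real.rpow_natCast, sq,
            Real.mul_self_sqrt (hbB0 i)]
        calc ∑ i, b i ^ (2:ℝ) = ∑ i, (B *ᵥ eigCol hM i) ⬝ᵥ (B *ᵥ eigCol hM i) :=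
              Finset.sum_congr rfl fun i _ => e i
          _ = ∑ c, ∑ a, B c a * B c a :=
              sum_dot_eq (Matrix.of fun a i => eigCol hM i a)
                (fun a b => eigCol_complete hM a b) B B
          _ = (n:ℝ) - 1 := sum_B_sq k
      have hbq : ∑ i, b i ^ q ≤ (n:ℝ) - 1 := by
        rw [← hbsum2]
        refine Finset.sum_le_sum fun i _ => ?_
        by_cases hbz : b i = 0
        · rw [hbz, Real.zero_rpow hq0.ne', Real.zero_rpow two_ne_zero]
        · exact Real.rpow_le_rpow_of_exponent_ge ((hb0 i).lt_of_ne (Ne.symm hbz))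
            (hb1 i) hq2
      have hchain : (n:ℝ) - 1 ≤ S ^ (1/p) * ((n:ℝ) - 1) ^ (1/q) := by
        calc (n:ℝ) - 1 ≤ ∑ i, (X *ᵥ eigCol hM i) ⬝ᵥ (B *ᵥ eigCol hM i) := husum
          _ ≤ ∑ i, singularValues X i * b i := by
              refine Finset.sum_le_sum fun i _ => ?_
              rw [← haX i, hbdef]
              exact dot_le_sqrt _ _
          _ ≤ (∑ i, singularValues X i ^ p) ^ (1/p) * (∑ i, b i ^ q) ^ (1/q) :=
              Real.inner_le_Lp_mul_Lq_of_nonneg Finset.univ hpq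
                (fun i _ => Real.sqrt_nonneg _) (fun i _ => hb0 i)
          _ ≤ S ^ (1/p) * ((n:ℝ) - 1) ^ (1/q) := by
              rw [← hSdef]
              exact mul_le_mul_of_nonneg_left
                (Real.rpow_le_rpow (Finset.sum_nonneg fun i _ =>
                  Real.rpow_nonneg (hb0 i) q) hbq (by positivity))
                (Real.rpow_nonneg hS0 _)
      exact rpow_cancel hn1 (Real.rpow_nonneg hS0 _) hp0 hq0 hpq1 hchain
    · -- 2 ≤ p
      have hN : (1 - matJ n : Matrix (Fin n) (Fin n) ℝ).IsHermitian := isHerm_N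
      have hvsum : ((n:ℝ) - 1) ≤ ∑ i, (X *ᵥ eigCol hN i) ⬝ᵥ (B *ᵥ eigCol hN i) := by
        have h := sum_dot_eq (Matrix.of fun a i => eigCol hN i a)
          (fun a b => eigCol_complete hN a b) X B
        exact hXB.trans_eq h.symm
      have hbv : ∀ i, (B *ᵥ eigCol hN i) ⬝ᵥ (B *ᵥ eigCol hN i) = hN.eigenvalues i := by
        intro i
        rw [← dot_XtX B (eigCol hN i), hBtB, rayleigh_eigCol hN i]
      set t := fun i => Real.sqrt ((X *ᵥ eigCol hN i) ⬝ᵥ (X *ᵥ eigCol hN i)) with htdef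
      set b := fun i => Real.sqrt ((B *ᵥ eigCol hN i) ⬝ᵥ (B *ᵥ eigCol hN i)) with hbdef
      have ht0 : ∀ i, 0 ≤ t i := fun i => Real.sqrt_nonneg _
      have hb0 : ∀ i, 0 ≤ b i := fun i => Real.sqrt_nonneg _
      have hbqsum : ∑ i, b i ^ q = (n:ℝ) - 1 := by
        have e : ∀ i, b i ^ q = hN.eigenvalues i := by
          intro i
          show Real.sqrt ((B *ᵥ eigCol hN i) ⬝ᵥ (B *ᵥ eigCol hN i)) ^ q = hN.eigenvalues i
          rw [hbv i]
          rcases eigN_01 hN i with h | h <;> rw [h]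
          · rw [Real.sqrt_zero, Real.zero_rpow hq0.ne']
          · rw [Real.sqrt_one, Real.one_rpow]
        rw [Finset.sum_congr rfl fun i _ => e i]
        exact eigN_sum hN
      -- Schur–Jensen: ∑ t^p ≤ S
      have hschur : ∑ i, t i ^ p ≤ S := by
        have hd : ∀ i, (X *ᵥ eigCol hN i) ⬝ᵥ (X *ᵥ eigCol hN i)
            = ∑ j, (eigCol hM j ⬝ᵥ eigCol hN i)^2 * hM.eigenvalues j := by
          intro i
          rw [← dot_XtX X (eigCol hN i), quad_expand hM (eigCol hN i)]
          exact Finset.sum_congr rfl fun j _ => mul_comm _ _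
        have hrow : ∀ i, ∑ j, (eigCol hM j ⬝ᵥ eigCol hN i)^2 = 1 := by
          intro i
          rw [sq_dot_sum_left hM (eigCol hN i), eigCol_dot hN i i, if_pos rfl]
        have hcol : ∀ j, ∑ i, (eigCol hM j ⬝ᵥ eigCol hN i)^2 = 1 := by
          intro j
          have e : ∀ i, (eigCol hM j ⬝ᵥ eigCol hN i)^2 = (eigCol hN i ⬝ᵥ eigCol hM j)^2 := by
            intro i; rw [dotProduct_comm]
          rw [Finset.sum_congr rfl fun i _ => e i, sq_dot_sum_left hN (eigCol hM j),
            eigCol_dot hM j j, if_pos rfl]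
        have hp2 : (1:ℝ) ≤ p/2 := by linarith
        have htp : ∀ i, t i ^ p
            = (∑ j, (eigCol hM j ⬝ᵥ eigCol hN i)^2 * hM.eigenvalues j) ^ (p/2) := by
          intro i
          show Real.sqrt ((X *ᵥ eigCol hN i) ⬝ᵥ (X *ᵥ eigCol hN i)) ^ p = _
          have hd0 : 0 ≤ (X *ᵥ eigCol hN i) ⬝ᵥ (X *ᵥ eigCol hN i) := dot_self_nonneg _
          rw [Real.sqrt_eq_rpow, ← Real.rpow_mul hd0, show (1:ℝ)/2*p = p/2 by ring, hd i]
        have hsvp : ∀ j, singularValues X j ^ p = hM.eigenvalues j ^ (p/2) := by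
          intro j
          rw [sv_def, Real.sqrt_eq_rpow, ← Real.rpow_mul (hμ0 j),
            show (1:ℝ)/2*p = p/2 by ring]
        calc ∑ i, t i ^ p
            = ∑ i, (∑ j, (eigCol hM j ⬝ᵥ eigCol hN i)^2 * hM.eigenvalues j) ^ (p/2) :=
              Finset.sum_congr rfl fun i _ => htp i
          _ ≤ ∑ i, ∑ j, (eigCol hM j ⬝ᵥ eigCol hN i)^2 * hM.eigenvalues j ^ (p/2) :=
              Finset.sum_le_sum fun i _ =>
                Real.rpow_arith_mean_le_arith_mean_rpow Finset.univ
                  (fun j => (eigCol hM j ⬝ᵥ eigCol hN i)^2) (fun j => hM.eigenvalues j)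
                  (fun j _ => sq_nonneg _) (hrow i) (fun j _ => hμ0 j) hp2
          _ = ∑ j, (∑ i, (eigCol hM j ⬝ᵥ eigCol hN i)^2) * hM.eigenvalues j ^ (p/2) := by
              rw [Finset.sum_comm]
              exact Finset.sum_congr rfl fun j _ => (Finset.sum_mul _ _ _).symm
          _ = ∑ j, hM.eigenvalues j ^ (p/2) := by
              refine Finset.sum_congr rfl fun j _ => ?_
              rw [hcol j, one_mul]
          _ = S := by
              rw [hSdef]
              exact (Finset.sum_congr rfl fun j _ => hsvp j).symm
      have hchain : (n:ℝ) - 1 ≤ S ^ (1/p) * ((n:ℝ) - 1) ^ (1/q) := by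
        calc (n:ℝ) - 1 ≤ ∑ i, (X *ᵥ eigCol hN i) ⬝ᵥ (B *ᵥ eigCol hN i) := hvsum
          _ ≤ ∑ i, t i * b i := by
              refine Finset.sum_le_sum fun i _ => ?_
              rw [htdef, hbdef]
              exact dot_le_sqrt _ _
          _ ≤ (∑ i, t i ^ p) ^ (1/p) * (∑ i, b i ^ q) ^ (1/q) :=
              Real.inner_le_Lp_mul_Lq_of_nonneg Finset.univ hpq
                (fun i _ => ht0 i) (fun i _ => hb0 i)
          _ ≤ S ^ (1/p) * ((n:ℝ) - 1) ^ (1/q) := by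
              rw [hbqsum]
              exact mul_le_mul_of_nonneg_right
                (Real.rpow_le_rpow (Finset.sum_nonneg fun i _ =>
                  Real.rpow_nonneg (ht0 i) p) hschur (by positivity))
                (Real.rpow_nonneg hn1 _)
      exact rpow_cancel hn1 (Real.rpow_nonneg hS0 _) hp0 hq0 hpq1 hchain

end master

section bdd
variable {n : ℕ} [NeZero n] {p : ℝ}

lemma schatten_bdd (hp : 1 ≤ p) (A : Matrix (Fin n) (Fin n) ℝ) {D : Matrix (Fin n) (Fin n) ℝ}
    (hD : D ∈ doublyStochastic ℝ (Fin n)) :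
    schattenNorm p (A - D) ≤
      ((n:ℝ) * Real.sqrt (∑ c, ∑ a, (|A a c| + 1) * (|A a c| + 1)) ^ p) ^ (1/p) := by
  have hp0 : (0:ℝ) < p := zero_lt_one.trans_le hp
  set T := ∑ c : Fin n, ∑ a : Fin n, (|A a c| + 1) * (|A a c| + 1) with hT
  have hT0 : (0:ℝ) ≤ T := Finset.sum_nonneg fun c _ => Finset.sum_nonneg fun a _ => by positivity
  set X : Matrix (Fin n) (Fin n) ℝ := A - D with hX
  have hM := Matrix.isHermitian_conjTranspose_mul_self X
  have hnn : ∀ i, 0 ≤ hM.eigenvalues i := Matrix.eigenvalues_conjTranspose_mul_self_nonneg X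
  have htr : ∑ j, hM.eigenvalues j ≤ T := by
    rw [sum_eig_eq_trace_s10 hM]
    have hcc : ∀ c, (Xᴴ * X) c c = ∑ a, X a c * X a c := by
      intro c
      rw [Matrix.mul_apply]
      exact Finset.sum_congr rfl fun a _ => by rw [Matrix.conjTranspose_apply, star_trivial]
    rw [Finset.sum_congr rfl fun c _ => hcc c]
    refine Finset.sum_le_sum fun c _ => Finset.sum_le_sum fun a _ => ?_
    have habs : |X a c| ≤ |A a c| + 1 := by
      rw [hX]
      calc |(A - D) a c| = |A a c - D a c| := by rw [Matrix.sub_apply]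
        _ ≤ |A a c| + |D a c| := abs_sub _ _
        _ ≤ |A a c| + 1 := by
            have h1 := nonneg_of_mem_doublyStochastic hD (i := a) (j := c)
            have h2 := le_one_of_mem_doublyStochastic hD (i := a) (j := c)
            rw [abs_of_nonneg h1]
            linarith
    calc X a c * X a c = |X a c| * |X a c| := (abs_mul_abs_self _).symm
      _ ≤ (|A a c| + 1) * (|A a c| + 1) :=
          mul_self_le_mul_self (abs_nonneg _) habs
  have hsv : ∀ i, singularValues X i ^ p ≤ Real.sqrt T ^ p := by
    intro i
    refine Real.rpow_le_rpow (Real.sqrt_nonneg _) ?_ hp0.le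
    rw [sv_def]
    refine Real.sqrt_le_sqrt ?_
    calc hM.eigenvalues i ≤ ∑ j, hM.eigenvalues j :=
          Finset.single_le_sum (fun j _ => hnn j) (Finset.mem_univ i)
      _ ≤ T := htr
  refine Real.rpow_le_rpow (Finset.sum_nonneg fun i _ =>
    Real.rpow_nonneg (Real.sqrt_nonneg _) p) ?_ (by positivity)
  calc ∑ i, singularValues X i ^ p ≤ ∑ _i : Fin n, Real.sqrt T ^ p :=
        Finset.sum_le_sum fun i _ => hsv i
    _ = (n:ℝ) * Real.sqrt T ^ p := by
        rw [Finset.sum_const, Finset.card_univ, Fintype.card_fin, nsmul_eq_mul]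

end bdd

section dsmem
variable {n : ℕ} [NeZero n]
lemma shiftMat_mem_DS (k : Fin n) : shiftMat n k ∈ doublyStochastic ℝ (Fin n) := by
  rw [mem_doublyStochastic_iff_sum]
  refine ⟨fun i j => by rw [shiftMat_apply]; split <;> norm_num, fun i => ?_, fun j => ?_⟩
  · simp [shiftMat_apply]
  · simp only [shiftMat_apply, shift_cond_iff]
    simp
end dsmem

end AUX

/-- For `n ≥ 1` and `1 ≤ p < ∞`, the Chebyshev radius of `Ω_n`
relative to the Schatten `p`-norm with unconstrained center equals `(n − 1)^{1/p}`,
and the infimum is attained at `A = J_n`. -/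
theorem chebyshev_radius_schatten {n : ℕ} (hn : 1 ≤ n) {p : ℝ} (hp : 1 ≤ p) :
    (⨅ A : Matrix (Fin n) (Fin n) ℝ,
        sSup {r : ℝ | ∃ D ∈ doublyStochastic ℝ (Fin n), r = schattenNorm p (A - D)}) =
        ((n : ℝ) - 1) ^ (1 / p) ∧
      sSup {r : ℝ | ∃ D ∈ doublyStochastic ℝ (Fin n), r = schattenNorm p (matJ n - D)} =
        ((n : ℝ) - 1) ^ (1 / p) := by
  haveI : NeZero n := ⟨by omega⟩
  set f : Matrix (Fin n) (Fin n) ℝ → ℝ := fun A =>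
    sSup {r : ℝ | ∃ D ∈ doublyStochastic ℝ (Fin n), r = schattenNorm p (A - D)} with hf
  have hbddAbove : ∀ A : Matrix (Fin n) (Fin n) ℝ,
      BddAbove {r : ℝ | ∃ D ∈ doublyStochastic ℝ (Fin n), r = schattenNorm p (A - D)} := by
    intro A
    refine ⟨((n:ℝ) * Real.sqrt (∑ c, ∑ a, (|A a c| + 1) * (|A a c| + 1)) ^ p) ^ (1/p), ?_⟩
    rintro r ⟨D, hD, rfl⟩
    exact schatten_bdd hp A hD
  have hlower : ∀ A : Matrix (Fin n) (Fin n) ℝ, ((n:ℝ) - 1) ^ (1/p) ≤ f A := by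
    intro A
    obtain ⟨k, hk⟩ := schatten_lower hp A
    exact hk.trans (le_csSup (hbddAbove A) ⟨shiftMat n k, shiftMat_mem_DS k, rfl⟩)
  have hsecond : f (matJ n) = ((n:ℝ) - 1) ^ (1/p) := by
    refine le_antisymm ?_ ?_
    · refine csSup_le ⟨schattenNorm p (matJ n - shiftMat n 0),
        shiftMat n 0, shiftMat_mem_DS 0, rfl⟩ ?_
      rintro r ⟨D, hD, rfl⟩
      exact schatten_le hp hD
    · exact le_csSup (hbddAbove (matJ n))
        ⟨shiftMat n 0, shiftMat_mem_DS 0, (schatten_B hp 0).symm⟩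
  have hbddBelow : BddBelow (Set.range f) := by
    refine ⟨((n:ℝ) - 1) ^ (1/p), ?_⟩
    rintro y ⟨A, rfl⟩
    exact hlower A
  constructor
  · exact le_antisymm ((ciInf_le hbddBelow (matJ n)).trans_eq hsecond) (le_ciInf hlower)
  · exact hsecond
end

section
/- Let n ≥ 2 and 1 ≤ p < ∞. The Chebyshev radius of the Birkhoff polytope Ω_n with centers constrained to Ω_n, namely inf over D ∈ Ω_n of max_{D' ∈ Ω_n} ‖D − D'‖_{S_p}, equals (n − 1)^{1/p}; moreover J_n attains this infimum, and it is the unique doubly stochastic matrix D with max_{D' ∈ Ω_n} ‖D − D'‖_{S_p} = (n − 1)^{1/p}. -/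
open Matrix BigOperators

namespace ChebAux

open Finset

variable {n : ℕ}

/-! ### Generic linear algebra helpers -/

lemma dot_self_nonneg (v : Fin n → ℝ) : 0 ≤ v ⬝ᵥ v :=
  Finset.sum_nonneg fun _ _ => mul_self_nonneg _

lemma dot_le_sqrt (v w : Fin n → ℝ) :
    v ⬝ᵥ w ≤ Real.sqrt (v ⬝ᵥ v) * Real.sqrt (w ⬝ᵥ w) := by
  have h := Finset.sum_mul_sq_le_sq_mul_sq Finset.univ v w
  have h2 : (v ⬝ᵥ w) ^ 2 ≤ (v ⬝ᵥ v) * (w ⬝ᵥ w) := by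
    simpa [dotProduct, sq] using h
  calc v ⬝ᵥ w ≤ |v ⬝ᵥ w| := le_abs_self _
    _ = Real.sqrt ((v ⬝ᵥ w) ^ 2) := (Real.sqrt_sq_eq_abs _).symm
    _ ≤ Real.sqrt ((v ⬝ᵥ v) * (w ⬝ᵥ w)) := Real.sqrt_le_sqrt h2
    _ = _ := Real.sqrt_mul (dot_self_nonneg v) _

lemma dot_AtA (A : Matrix (Fin n) (Fin n) ℝ) (x : Fin n → ℝ) :
    x ⬝ᵥ ((Aᵀ * A) *ᵥ x) = (A *ᵥ x) ⬝ᵥ (A *ᵥ x) := by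
  rw [← Matrix.mulVec_mulVec, Matrix.dotProduct_mulVec, Matrix.vecMul_transpose]

lemma eigen_pack (A : Matrix (Fin n) (Fin n) ℝ) :
    ∃ v : Fin n → Fin n → ℝ,
      (∀ j, v j ⬝ᵥ v j = 1) ∧
      (∀ j, (Aᵀ * A) *ᵥ v j =
        ((Matrix.isHermitian_conjTranspose_mul_self A).eigenvalues j) • v j) ∧
      (∀ M : Matrix (Fin n) (Fin n) ℝ, M.trace = ∑ j, v j ⬝ᵥ (M *ᵥ v j)) := by
  set hH := Matrix.isHermitian_conjTranspose_mul_self A with hHdef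
  set V : Matrix (Fin n) (Fin n) ℝ := (hH.eigenvectorUnitary : Matrix (Fin n) (Fin n) ℝ) with hV
  have hsV : star V * V = 1 := Matrix.mem_unitaryGroup_iff'.mp hH.eigenvectorUnitary.2
  have hVs : V * star V = 1 := Matrix.mem_unitaryGroup_iff.mp hH.eigenvectorUnitary.2
  refine ⟨fun j k => V k j, fun j => ?_, fun j => ?_, fun M => ?_⟩
  · have h := Matrix.ext_iff.2 hsV j j
    simpa [Matrix.mul_apply, dotProduct, Matrix.one_apply] using h
  · have hHV : (Aᴴ * A) * V = V * Matrix.diagonal hH.eigenvalues := by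
      conv_lhs => rw [hH.spectral_theorem, Unitary.conjStarAlgAut_apply]
      rw [mul_assoc, mul_assoc, hsV, mul_one]
      simp [Function.comp]
      rfl
    have hct : Aᴴ = Aᵀ := by ext i j; simp [Matrix.conjTranspose_apply]
    rw [← hct]
    funext k
    have h := Matrix.ext_iff.2 hHV k j
    rw [Matrix.mul_diagonal] at h
    show ((Aᴴ * A) *ᵥ fun k => V k j) k = _
    simpa [Matrix.mul_apply, Matrix.mulVec, dotProduct, mul_comm] using h
  · have h1 : M.trace = (star V * M * V).trace := by
      rw [Matrix.trace_mul_cycle, hVs, one_mul]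
    rw [h1, Matrix.trace]
    refine Finset.sum_congr rfl fun j _ => ?_
    rw [Matrix.diag, Matrix.mul_apply]
    simp only [Matrix.mul_apply, dotProduct, Matrix.mulVec, Finset.sum_mul,
      Finset.mul_sum]
    rw [Finset.sum_comm]
    refine Finset.sum_congr rfl fun k _ => Finset.sum_congr rfl fun l _ => ?_
    simp [Matrix.star_apply]
    ring

lemma sv_nonneg (A : Matrix (Fin n) (Fin n) ℝ) (j : Fin n) : 0 ≤ singularValues A j :=
  Real.sqrt_nonneg _

lemma lam_eq_dot (A : Matrix (Fin n) (Fin n) ℝ) (v : Fin n → Fin n → ℝ)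
    (hu : ∀ j, v j ⬝ᵥ v j = 1)
    (he : ∀ j, (Aᵀ * A) *ᵥ v j =
      ((Matrix.isHermitian_conjTranspose_mul_self A).eigenvalues j) • v j) (j : Fin n) :
    (A *ᵥ v j) ⬝ᵥ (A *ᵥ v j) =
      (Matrix.isHermitian_conjTranspose_mul_self A).eigenvalues j := by
  rw [← dot_AtA, he j, dotProduct_smul, hu j, smul_eq_mul, mul_one]

lemma sv_le_of_bound {A : Matrix (Fin n) (Fin n) ℝ} {c : ℝ} (hc : 0 ≤ c)
    (h : ∀ x, (A *ᵥ x) ⬝ᵥ (A *ᵥ x) ≤ c ^ 2 * (x ⬝ᵥ x)) (j : Fin n) :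
    singularValues A j ≤ c := by
  obtain ⟨v, hu, he, -⟩ := eigen_pack A
  have hl : (Matrix.isHermitian_conjTranspose_mul_self A).eigenvalues j ≤ c ^ 2 := by
    have h2 := h (v j)
    rw [lam_eq_dot A v hu he j, hu j, mul_one] at h2
    exact h2
  calc singularValues A j ≤ Real.sqrt (c ^ 2) := Real.sqrt_le_sqrt hl
    _ = c := Real.sqrt_sq hc

lemma exists_sv_zero {A : Matrix (Fin n) (Fin n) ℝ} (h : A.det = 0) :
    ∃ j, singularValues A j = 0 := by
  have hd : (Aᴴ * A).det = 0 := by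
    rw [Matrix.det_mul, h, mul_zero]
  rw [(Matrix.isHermitian_conjTranspose_mul_self A).det_eq_prod_eigenvalues] at hd
  obtain ⟨j, -, hj⟩ := Finset.prod_eq_zero_iff.mp hd
  have hj' : (Matrix.isHermitian_conjTranspose_mul_self A).eigenvalues j = 0 := by
    exact_mod_cast hj
  exact ⟨j, by unfold singularValues; rw [hj', Real.sqrt_zero]⟩

lemma trace_le_sum_sv (A U : Matrix (Fin n) (Fin n) ℝ) (hU : Uᵀ * U = 1) :
    (U * A).trace ≤ ∑ j, singularValues A j := by
  obtain ⟨v, hu, he, htr⟩ := eigen_pack A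
  rw [htr (U * A)]
  refine Finset.sum_le_sum fun j _ => ?_
  have h1 : (U * A) *ᵥ v j = U *ᵥ (A *ᵥ v j) := (Matrix.mulVec_mulVec _ _ _).symm
  have h2 : (U *ᵥ (A *ᵥ v j)) ⬝ᵥ (U *ᵥ (A *ᵥ v j)) = (A *ᵥ v j) ⬝ᵥ (A *ᵥ v j) := by
    rw [← dot_AtA U (A *ᵥ v j), hU, Matrix.one_mulVec]
  calc v j ⬝ᵥ ((U * A) *ᵥ v j)
      ≤ Real.sqrt (v j ⬝ᵥ v j) * Real.sqrt ((U *ᵥ (A *ᵥ v j)) ⬝ᵥ (U *ᵥ (A *ᵥ v j))) := by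
        rw [h1]; exact dot_le_sqrt _ _
    _ = singularValues A j := by
        rw [h2, hu j, Real.sqrt_one, one_mul, lam_eq_dot A v hu he j]; rfl

/-! ### Doubly stochastic matrix helpers -/

lemma ds_contraction {D : Matrix (Fin n) (Fin n) ℝ}
    (hD : D ∈ doublyStochastic ℝ (Fin n)) (x : Fin n → ℝ) :
    (D *ᵥ x) ⬝ᵥ (D *ᵥ x) ≤ x ⬝ᵥ x := by
  obtain ⟨h0, hrow, hcol⟩ := mem_doublyStochastic_iff_sum.mp hD
  have key : ∀ i, (D *ᵥ x) i * (D *ᵥ x) i ≤ ∑ j, D i j * x j ^ 2 := by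
    intro i
    have h := Finset.sum_sq_le_sum_mul_sum_of_sq_eq_mul Finset.univ
      (f := fun j => D i j) (g := fun j => D i j * x j ^ 2) (r := fun j => D i j * x j)
      (fun j _ => h0 i j) (fun j _ => mul_nonneg (h0 i j) (sq_nonneg _))
      (fun j _ => by ring)
    rw [hrow i, one_mul] at h
    simpa [Matrix.mulVec, dotProduct, ← sq] using h
  calc (D *ᵥ x) ⬝ᵥ (D *ᵥ x) ≤ ∑ i, ∑ j, D i j * x j ^ 2 :=
        Finset.sum_le_sum fun i _ => key i
    _ = ∑ j, (∑ i, D i j) * x j ^ 2 := by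
        rw [Finset.sum_comm]; simp [Finset.sum_mul]
    _ = x ⬝ᵥ x := by simp [hcol, dotProduct, sq]

lemma matJ_mem (hn : 1 ≤ n) : matJ n ∈ doublyStochastic ℝ (Fin n) := by
  have hn' : (n : ℝ) ≠ 0 := Nat.cast_ne_zero.mpr (by omega)
  rw [mem_doublyStochastic_iff_sum]
  refine ⟨fun i j => by simp only [matJ, Matrix.of_apply]; positivity,
    fun i => ?_, fun j => ?_⟩ <;>
    simp [matJ, Finset.card_univ, mul_inv_cancel₀ hn']

lemma det_sub_ds {A B : Matrix (Fin n) (Fin n) ℝ} (hn : 1 ≤ n)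
    (hA : A ∈ doublyStochastic ℝ (Fin n)) (hB : B ∈ doublyStochastic ℝ (Fin n)) :
    (A - B).det = 0 := by
  rw [← Matrix.exists_mulVec_eq_zero_iff]
  refine ⟨1, ?_, ?_⟩
  · intro h
    have := congrFun h ⟨0, by omega⟩
    simp at this
  · rw [Matrix.sub_mulVec, mulVec_one_of_mem_doublyStochastic hA,
      mulVec_one_of_mem_doublyStochastic hB, sub_self]

lemma permMatrix_apply (σ : Equiv.Perm (Fin n)) (i j : Fin n) :
    σ.permMatrix ℝ i j = if σ i = j then 1 else 0 := by
  simp [Equiv.Perm.permMatrix, PEquiv.toMatrix_apply, Equiv.toPEquiv_apply, eq_comm]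

lemma perm_mul_transpose (σ : Equiv.Perm (Fin n)) :
    σ.permMatrix ℝ * (σ.permMatrix ℝ)ᵀ = 1 := by
  show σ.toPEquiv.toMatrix * (σ.toPEquiv.toMatrix)ᵀ = 1
  rw [← PEquiv.toMatrix_symm, ← PEquiv.toMatrix_trans, ← Equiv.toPEquiv_symm,
    ← Equiv.toPEquiv_trans]
  simp

lemma perm_orth (σ : Equiv.Perm (Fin n)) :
    (-(σ.permMatrix ℝ)ᵀ)ᵀ * (-(σ.permMatrix ℝ)ᵀ) = 1 := by
  rw [Matrix.transpose_neg, Matrix.transpose_transpose, Matrix.neg_mul, Matrix.mul_neg,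
    neg_neg, perm_mul_transpose]

lemma trace_perm_transpose_mul (σ : Equiv.Perm (Fin n)) (D : Matrix (Fin n) (Fin n) ℝ) :
    ((σ.permMatrix ℝ)ᵀ * D).trace = ∑ i, D i (σ i) := by
  rw [Matrix.trace]
  simp only [Matrix.diag, Matrix.mul_apply, Matrix.transpose_apply, permMatrix_apply]
  rw [Finset.sum_comm]
  refine Finset.sum_congr rfl fun k _ => ?_
  simp

lemma trace_neg_perm_mul (σ : Equiv.Perm (Fin n)) (D : Matrix (Fin n) (Fin n) ℝ) :
    ((-(σ.permMatrix ℝ)ᵀ) * (D - σ.permMatrix ℝ)).trace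
      = (n : ℝ) - ∑ i, D i (σ i) := by
  rw [Matrix.neg_mul, Matrix.trace_neg, Matrix.mul_sub, Matrix.trace_sub,
    trace_perm_transpose_mul, trace_perm_transpose_mul]
  have h : ∑ i, (σ.permMatrix ℝ) i (σ i) = (n : ℝ) := by
    simp [permMatrix_apply, Equiv.toPEquiv_apply, Finset.card_univ]
  rw [h]
  ring

/-! ### rpow estimates -/

lemma card_erase_real (hn : 1 ≤ n) (j₀ : Fin n) :
    ((Finset.univ.erase j₀).card : ℝ) = (n : ℝ) - 1 := by
  rw [Finset.card_erase_of_mem (Finset.mem_univ _), Finset.card_univ, Fintype.card_fin,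
    Nat.cast_sub hn, Nat.cast_one]

lemma sum_le_rpow_mul (hn : 2 ≤ n) {p : ℝ} (hp : 1 ≤ p) (g : Fin n → ℝ)
    (hg : ∀ i, 0 ≤ g i) {j₀ : Fin n} (hj₀ : g j₀ = 0) :
    ∑ i, g i ≤ ((n : ℝ) - 1) ^ (1 - 1/p) * (∑ i, g i ^ p) ^ (1/p) := by
  have hp0 : 0 < p := lt_of_lt_of_le one_pos hp
  have hb : (0:ℝ) < (n:ℝ) - 1 := by
    have : (2:ℝ) ≤ (n:ℝ) := by exact_mod_cast hn
    linarith
  set b : ℝ := (n:ℝ) - 1 with hbdef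
  set s := Finset.univ.erase j₀ with hs
  have hcard : (s.card : ℝ) = b := card_erase_real (by omega) j₀
  have hsum1 : ∑ _i ∈ s, b⁻¹ = 1 := by
    rw [Finset.sum_const, nsmul_eq_mul, hcard, mul_inv_cancel₀ hb.ne']
  have jensen := Real.rpow_arith_mean_le_arith_mean_rpow s (fun _ => b⁻¹) g
    (fun i _ => by positivity) hsum1 (fun i _ => hg i) hp
  simp only [← Finset.mul_sum] at jensen
  set S := ∑ i ∈ s, g i with hSdef
  set T := ∑ i ∈ s, g i ^ p with hTdef
  have hS0 : 0 ≤ S := Finset.sum_nonneg fun i _ => hg i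
  have hX : 0 ≤ b⁻¹ * S := by positivity
  have h1 : b⁻¹ * S ≤ (b⁻¹ * T) ^ (1/p) := by
    have h2 : ((b⁻¹ * S) ^ p) ^ (1/p) ≤ (b⁻¹ * T) ^ (1/p) :=
      Real.rpow_le_rpow (Real.rpow_nonneg hX p) jensen (by positivity)
    rwa [← Real.rpow_mul hX, mul_one_div, div_self hp0.ne', Real.rpow_one] at h2
  have hT0 : 0 ≤ T := Finset.sum_nonneg fun i _ => Real.rpow_nonneg (hg i) p
  have h3 : S ≤ b * ((b⁻¹) ^ (1/p) * T ^ (1/p)) := by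
    rw [← Real.mul_rpow (by positivity) hT0]
    calc S = b * (b⁻¹ * S) := by field_simp
      _ ≤ b * ((b⁻¹ * T) ^ (1/p)) := mul_le_mul_of_nonneg_left h1 hb.le
  have hbb : b * (b⁻¹) ^ (1/p) = b ^ (1 - 1/p) := by
    rw [Real.inv_rpow hb.le, Real.rpow_sub hb, Real.rpow_one, div_eq_mul_inv]
    ring
  have hSs : ∑ i, g i = S := by
    rw [hSdef, hs, Finset.sum_erase _ hj₀]
  have hTs : T ≤ ∑ i, g i ^ p :=
    Finset.sum_le_sum_of_subset_of_nonneg (Finset.subset_univ s)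
      (fun i _ _ => Real.rpow_nonneg (hg i) p)
  calc ∑ i, g i = S := hSs
    _ ≤ b ^ (1 - 1/p) * T ^ (1/p) := by rw [← hbb]; linarith [h3]
    _ ≤ b ^ (1 - 1/p) * (∑ i, g i ^ p) ^ (1/p) := by
        have := Real.rpow_le_rpow hT0 hTs (by positivity : (0:ℝ) ≤ 1/p)
        exact mul_le_mul_of_nonneg_left this (Real.rpow_nonneg hb.le _)

lemma schattenNorm_le_of (hn : 2 ≤ n) {p : ℝ} (hp : 1 ≤ p)
    {A : Matrix (Fin n) (Fin n) ℝ} {c : ℝ} (hc : 0 ≤ c)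
    (hsvle : ∀ j, singularValues A j ≤ c)
    (hex : ∃ j, singularValues A j = 0) :
    schattenNorm p A ≤ ((n : ℝ) - 1) ^ (1/p) * c := by
  have hp0 : 0 < p := lt_of_lt_of_le one_pos hp
  obtain ⟨j₀, hj₀⟩ := hex
  have hb : (0:ℝ) < (n:ℝ) - 1 := by
    have : (2:ℝ) ≤ (n:ℝ) := by exact_mod_cast hn
    linarith
  have hsum : ∑ j, singularValues A j ^ p ≤ ((n:ℝ) - 1) * c ^ p := by
    rw [← Finset.sum_erase (a := j₀) _ (by rw [hj₀]; exact Real.zero_rpow hp0.ne')]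
    calc ∑ j ∈ Finset.univ.erase j₀, singularValues A j ^ p
        ≤ ∑ _j ∈ Finset.univ.erase j₀, c ^ p :=
          Finset.sum_le_sum fun j _ => Real.rpow_le_rpow (Real.sqrt_nonneg _) (hsvle j) hp0.le
      _ = ((n:ℝ) - 1) * c ^ p := by
          rw [Finset.sum_const, nsmul_eq_mul, card_erase_real (by omega) j₀]
  have hsum0 : 0 ≤ ∑ j, singularValues A j ^ p :=
    Finset.sum_nonneg fun j _ => Real.rpow_nonneg (Real.sqrt_nonneg _) p
  calc schattenNorm p A ≤ (((n:ℝ) - 1) * c ^ p) ^ (1/p) :=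
        Real.rpow_le_rpow hsum0 hsum (by positivity)
    _ = ((n : ℝ) - 1) ^ (1/p) * c := by
        rw [Real.mul_rpow hb.le (Real.rpow_nonneg hc p), ← Real.rpow_mul hc,
          mul_one_div, div_self hp0.ne', Real.rpow_one]

/-! ### Contractions -/

lemma sum_mulVec_ds {D : Matrix (Fin n) (Fin n) ℝ}
    (hD : D ∈ doublyStochastic ℝ (Fin n)) (x : Fin n → ℝ) :
    ∑ i, (D *ᵥ x) i = ∑ j, x j := by
  obtain ⟨h0, hrow, hcol⟩ := mem_doublyStochastic_iff_sum.mp hD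
  simp only [Matrix.mulVec, dotProduct]
  rw [Finset.sum_comm]
  refine Finset.sum_congr rfl fun j _ => ?_
  rw [← Finset.sum_mul, hcol j, one_mul]

lemma J_sub_contraction (hn : 1 ≤ n) {D' : Matrix (Fin n) (Fin n) ℝ}
    (hD' : D' ∈ doublyStochastic ℝ (Fin n)) (x : Fin n → ℝ) :
    ((matJ n - D') *ᵥ x) ⬝ᵥ ((matJ n - D') *ᵥ x) ≤ 1 ^ 2 * (x ⬝ᵥ x) := by
  have hn0 : ((n:ℝ)) ≠ 0 := Nat.cast_ne_zero.mpr (by omega)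
  set a := D' *ᵥ x with ha
  set c : ℝ := (∑ j, x j) * (n:ℝ)⁻¹ with hc
  have hJx : (matJ n) *ᵥ x = fun _ => c := by
    funext i
    simp [matJ, Matrix.mulVec, dotProduct, hc, Finset.sum_mul, mul_comm]
  have hAx : (matJ n - D') *ᵥ x = fun i => c - a i := by
    rw [Matrix.sub_mulVec, hJx]; rfl
  have hsa : ∑ i, a i = (n:ℝ) * c := by
    rw [ha, sum_mulVec_ds hD' x, hc]
    field_simp
  have expand : ∀ i, (c - a i) * (c - a i) = c^2 - 2*c*(a i) + a i * a i :=
    fun i => by ring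
  have hdot : ((matJ n - D') *ᵥ x) ⬝ᵥ ((matJ n - D') *ᵥ x)
      = (n:ℝ)*c^2 - 2*c*(∑ i, a i) + ∑ i, a i * a i := by
    rw [hAx, dotProduct]
    rw [Finset.sum_congr rfl fun i _ => expand i]
    rw [Finset.sum_add_distrib, Finset.sum_sub_distrib, Finset.sum_const, ← Finset.mul_sum]
    simp [Finset.card_univ, nsmul_eq_mul]
  have hle : ∑ i, a i * a i ≤ x ⬝ᵥ x := ds_contraction hD' x
  have hc2 : 0 ≤ (n:ℝ) * c^2 := by positivity
  rw [hdot, hsa]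
  nlinarith [hle]

lemma sub_ds_contraction {D D' : Matrix (Fin n) (Fin n) ℝ}
    (hD : D ∈ doublyStochastic ℝ (Fin n)) (hD' : D' ∈ doublyStochastic ℝ (Fin n))
    (x : Fin n → ℝ) :
    ((D - D') *ᵥ x) ⬝ᵥ ((D - D') *ᵥ x) ≤ 2 ^ 2 * (x ⬝ᵥ x) := by
  set u := D *ᵥ x
  set v := D' *ᵥ x
  have hAx : (D - D') *ᵥ x = fun i => u i - v i := by
    rw [Matrix.sub_mulVec]; rfl
  have h1 : ((D - D') *ᵥ x) ⬝ᵥ ((D - D') *ᵥ x) ≤ 2 * (u ⬝ᵥ u) + 2 * (v ⬝ᵥ v) := by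
    rw [hAx, dotProduct]
    have hpt : ∀ i, (u i - v i) * (u i - v i) ≤ 2 * (u i * u i) + 2 * (v i * v i) := by
      intro i; nlinarith [sq_nonneg (u i + v i)]
    calc ∑ i, (u i - v i) * (u i - v i) ≤ ∑ i, (2 * (u i * u i) + 2 * (v i * v i)) :=
          Finset.sum_le_sum fun i _ => hpt i
      _ = 2 * (u ⬝ᵥ u) + 2 * (v ⬝ᵥ v) := by
          rw [Finset.sum_add_distrib, ← Finset.mul_sum, ← Finset.mul_sum]; rfl
  have h2 : u ⬝ᵥ u ≤ x ⬝ᵥ x := ds_contraction hD x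
  have h3 : v ⬝ᵥ v ≤ x ⬝ᵥ x := ds_contraction hD' x
  nlinarith

/-! ### Value at the identity -/

lemma matJ_mul_matJ (hn : 1 ≤ n) : matJ n * matJ n = matJ n := by
  have hn0 : ((n:ℝ)) ≠ 0 := Nat.cast_ne_zero.mpr (by omega)
  ext i j
  simp [matJ, Matrix.mul_apply, Finset.card_univ]
  field_simp

lemma AtA_J_sub_one (hn : 1 ≤ n) :
    (matJ n - 1)ᵀ * (matJ n - 1) = 1 - matJ n := by
  have hJt : (matJ n)ᵀ = matJ n := by ext i j; simp [matJ]
  rw [Matrix.transpose_sub, Matrix.transpose_one, hJt, Matrix.sub_mul, Matrix.mul_sub,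
    Matrix.mul_sub, matJ_mul_matJ hn, Matrix.mul_one, Matrix.one_mul, Matrix.one_mul]
  abel

lemma one_sub_J_idem (hn : 1 ≤ n) :
    (1 - matJ n) * (1 - matJ n) = 1 - matJ n := by
  have h : (1 - matJ n) * (1 - matJ n)
      = 1 - matJ n - matJ n + matJ n * matJ n := by noncomm_ring
  rw [h, matJ_mul_matJ hn]
  abel

lemma trace_one_sub_J (hn : 1 ≤ n) : (1 - matJ n : Matrix (Fin n) (Fin n) ℝ).trace
    = (n : ℝ) - 1 := by
  have hn0 : ((n:ℝ)) ≠ 0 := Nat.cast_ne_zero.mpr (by omega)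
  rw [Matrix.trace_sub, Matrix.trace_one]
  have h : (matJ n).trace = 1 := by
    simp [Matrix.trace, Matrix.diag, matJ, Finset.card_univ]
    field_simp
  rw [h]
  simp

lemma schattenNorm_J_sub_one (hn : 2 ≤ n) {p : ℝ} (hp : 1 ≤ p) :
    schattenNorm p (matJ n - 1) = ((n : ℝ) - 1) ^ (1/p) := by
  have hp0 : 0 < p := lt_of_lt_of_le one_pos hp
  set A := matJ n - (1 : Matrix (Fin n) (Fin n) ℝ) with hA
  obtain ⟨v, hu, he, htr⟩ := eigen_pack A
  set lam := (Matrix.isHermitian_conjTranspose_mul_self A).eigenvalues with hlam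
  have hAtA : Aᵀ * A = 1 - matJ n := AtA_J_sub_one (by omega)
  have hvne : ∀ j, ∃ k, v j k ≠ 0 := by
    intro j
    by_contra h
    push_neg at h
    have h1 : v j ⬝ᵥ v j = 0 := by
      simp [dotProduct, h]
    rw [hu j] at h1
    norm_num at h1
  have hle : ∀ j, lam j * lam j = lam j := by
    intro j
    have he' : (1 - matJ n) *ᵥ v j = lam j • v j := by rw [← hAtA]; exact he j
    have h2 : (1 - matJ n) *ᵥ ((1 - matJ n) *ᵥ v j) = (lam j * lam j) • v j := by
      rw [he', Matrix.mulVec_smul, he', smul_smul]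
    rw [Matrix.mulVec_mulVec, one_sub_J_idem (by omega), he'] at h2
    obtain ⟨k, hk⟩ := hvne j
    have h3 := congrFun h2 k
    simp only [Pi.smul_apply, smul_eq_mul] at h3
    exact (mul_right_cancel₀ hk h3).symm
  have hlam01 : ∀ j, lam j = 0 ∨ lam j = 1 := by
    intro j
    have h4 := hle j
    rcases eq_or_ne (lam j) 0 with h | h
    · exact Or.inl h
    · right
      have h5 : lam j * lam j = lam j * 1 := by rw [mul_one]; exact h4
      exact mul_left_cancel₀ h h5
  have hsum : ∑ j, lam j = (n:ℝ) - 1 := by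
    have h1 := htr (Aᵀ * A)
    rw [hAtA, trace_one_sub_J (by omega)] at h1
    rw [h1]
    refine Finset.sum_congr rfl fun j _ => ?_
    rw [← hAtA, he j, dotProduct_smul, hu j, smul_eq_mul, mul_one]
  have hsvp : ∀ j, singularValues A j ^ p = lam j := by
    intro j
    rcases hlam01 j with h | h
    · rw [singularValues, ← hlam, h, Real.sqrt_zero, Real.zero_rpow hp0.ne']
    · rw [singularValues, ← hlam, h, Real.sqrt_one, Real.one_rpow]
  rw [schattenNorm, Finset.sum_congr rfl fun j _ => hsvp j, hsum]

/-! ### Permutation counting -/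

lemma sum_perm_apply {m : ℕ} (f : Fin (m+1) → ℝ) (i : Fin (m+1)) :
    ∑ σ : Equiv.Perm (Fin (m+1)), f (σ i) = (Nat.factorial m : ℝ) * ∑ j, f j := by
  have h1 : ∑ σ : Equiv.Perm (Fin (m+1)), f (σ 0) = ∑ σ : Equiv.Perm (Fin (m+1)), f (σ i) := by
    refine Fintype.sum_equiv (Equiv.mulRight (Equiv.swap 0 i)) _ _ fun σ => ?_
    simp [Equiv.Perm.mul_apply, Equiv.swap_apply_right]
  rw [← h1]
  have h2 : ∑ σ : Equiv.Perm (Fin (m+1)), f (σ 0)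
      = ∑ pr : Fin (m+1) × Equiv.Perm (Fin m), f pr.1 := by
    refine (Fintype.sum_equiv Equiv.Perm.decomposeFin.symm _ _ fun pr => ?_).symm
    rw [Equiv.Perm.decomposeFin_symm_apply_zero]
  rw [h2, Fintype.sum_prod_type, Finset.mul_sum]
  refine Finset.sum_congr rfl fun x _ => ?_
  simp [Finset.sum_const, Finset.card_univ, Fintype.card_perm, Fintype.card_fin,
    nsmul_eq_mul, mul_comm]

lemma sum_traces {D : Matrix (Fin n) (Fin n) ℝ}
    (hD : D ∈ doublyStochastic ℝ (Fin n)) (hn : 1 ≤ n) :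
    ∑ σ : Equiv.Perm (Fin n), ∑ i, D i (σ i) = (Nat.factorial n : ℝ) := by
  obtain ⟨m, rfl⟩ : ∃ m, n = m + 1 := ⟨n - 1, by omega⟩
  rw [Finset.sum_comm]
  have h : ∀ i, ∑ σ : Equiv.Perm (Fin (m+1)), D i (σ i)
      = (Nat.factorial m : ℝ) * ∑ j, D i j := fun i => sum_perm_apply (fun j => D i j) i
  rw [Finset.sum_congr rfl fun i _ => h i]
  have hrow := (mem_doublyStochastic_iff_sum.mp hD).2.1
  rw [Finset.sum_congr rfl fun i (_ : i ∈ Finset.univ) => by rw [hrow i, mul_one]]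
  rw [Finset.sum_const, Finset.card_univ, Fintype.card_fin, nsmul_eq_mul]
  rw [Nat.factorial_succ]
  push_cast
  ring

lemma exists_perm_trace_le {D : Matrix (Fin n) (Fin n) ℝ}
    (hD : D ∈ doublyStochastic ℝ (Fin n)) (hn : 1 ≤ n) :
    ∃ σ : Equiv.Perm (Fin n), ∑ i, D i (σ i) ≤ 1 := by
  have hsum := sum_traces hD hn
  by_contra h
  push_neg at h
  have h2 : (Nat.factorial n : ℝ) < ∑ σ : Equiv.Perm (Fin n), ∑ i, D i (σ i) := by
    calc (Nat.factorial n : ℝ) = ∑ _σ : Equiv.Perm (Fin n), (1:ℝ) := by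
          simp [Finset.card_univ, Fintype.card_perm]
      _ < _ := Finset.sum_lt_sum_of_nonempty ⟨1, Finset.mem_univ 1⟩ fun σ _ => h σ
  linarith [hsum]

lemma traces_eq_one {D : Matrix (Fin n) (Fin n) ℝ}
    (hD : D ∈ doublyStochastic ℝ (Fin n)) (hn : 1 ≤ n)
    (h : ∀ σ : Equiv.Perm (Fin n), 1 ≤ ∑ i, D i (σ i)) :
    ∀ σ : Equiv.Perm (Fin n), ∑ i, D i (σ i) = 1 := by
  have hsum := sum_traces hD hn
  have hzero : ∑ σ : Equiv.Perm (Fin n), ((∑ i, D i (σ i)) - 1) = 0 := by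
    rw [Finset.sum_sub_distrib, hsum]
    simp [Finset.card_univ, Fintype.card_perm]
  have hz := (Finset.sum_eq_zero_iff_of_nonneg fun σ _ => by linarith [h σ]).mp hzero
  intro σ
  have := hz σ (Finset.mem_univ σ)
  linarith

lemma eq_matJ_of_traces {D : Matrix (Fin n) (Fin n) ℝ}
    (hD : D ∈ doublyStochastic ℝ (Fin n)) (hn : 2 ≤ n)
    (ht : ∀ σ : Equiv.Perm (Fin n), ∑ i, D i (σ i) = 1) : D = matJ n := by
  have hn0 : ((n:ℝ)) ≠ 0 := Nat.cast_ne_zero.mpr (by omega)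
  have hswap : ∀ (τ : Equiv.Perm (Fin n)) (i k : Fin n),
      D i (τ i) + D k (τ k) = D i (τ k) + D k (τ i) := by
    intro τ i k
    rcases eq_or_ne i k with rfl | hik
    · ring
    · set τ' := τ * Equiv.swap i k with hτ'
      have key : ∀ ρ : Equiv.Perm (Fin n), ∑ x, D x (ρ x)
          = D i (ρ i) + D k (ρ k) + ∑ x ∈ (Finset.univ.erase i).erase k, D x (ρ x) := by
        intro ρ
        rw [← Finset.add_sum_erase _ _ (Finset.mem_univ i),
          ← Finset.add_sum_erase _ _ (Finset.mem_erase.mpr ⟨hik.symm, Finset.mem_univ k⟩)]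
        ring
      have h1 := ht τ
      have h2 := ht τ'
      rw [key τ] at h1
      rw [key τ'] at h2
      have hrest : ∑ x ∈ (Finset.univ.erase i).erase k, D x (τ' x)
          = ∑ x ∈ (Finset.univ.erase i).erase k, D x (τ x) := by
        refine Finset.sum_congr rfl fun x hx => ?_
        obtain ⟨hxk, hxi⟩ := by
          simpa [Finset.mem_erase] using hx
        rw [hτ', Equiv.Perm.mul_apply, Equiv.swap_apply_of_ne_of_ne hxi hxk]
      have hti : τ' i = τ k := by rw [hτ', Equiv.Perm.mul_apply, Equiv.swap_apply_left]
      have htk : τ' k = τ i := by rw [hτ', Equiv.Perm.mul_apply, Equiv.swap_apply_right]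
      rw [hrest, hti, htk] at h2
      linarith
  have hrel : ∀ i k j l : Fin n, D i j + D k l = D i l + D k j := by
    intro i k j l
    rcases eq_or_ne i k with rfl | hik
    · ring
    rcases eq_or_ne j l with rfl | hjl
    · ring
    set σ₁ := Equiv.swap i j with hσ₁
    set σ₂ := Equiv.swap (σ₁ k) l with hσ₂
    set τ := σ₂ * σ₁ with hτ
    have hτi : τ i = j := by
      rw [hτ, Equiv.Perm.mul_apply, hσ₁, Equiv.swap_apply_left, hσ₂]
      refine Equiv.swap_apply_of_ne_of_ne ?_ hjl
      intro hjk
      exact hik (Equiv.injective σ₁ (by rw [hσ₁, Equiv.swap_apply_left]; exact hjk))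
    have hτk : τ k = l := by rw [hτ, Equiv.Perm.mul_apply, hσ₂, Equiv.swap_apply_left]
    have h := hswap τ i k
    rw [hτi, hτk] at h
    exact h
  set z : Fin n := ⟨0, by omega⟩ with hz
  have hentry : ∀ i j, D i j = D i z + D z j - D z z := by
    intro i j
    have := hrel i z j z
    linarith
  obtain ⟨h0, hrow, hcol⟩ := mem_doublyStochastic_iff_sum.mp hD
  have hiz : ∀ i, D i z = D z z := by
    intro i
    have h1 := hrow i
    have h2 := hrow z
    rw [Finset.sum_congr rfl fun j (_ : j ∈ Finset.univ) => hentry i j] at h1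
    simp only [Finset.sum_sub_distrib, Finset.sum_add_distrib, Finset.sum_const,
      Finset.card_univ, Fintype.card_fin, nsmul_eq_mul] at h1
    rw [h2] at h1
    have h3 : (n:ℝ) * D i z = (n:ℝ) * D z z := by linarith
    exact mul_left_cancel₀ hn0 h3
  have hzj : ∀ j, D z j = D z z := by
    intro j
    have h1 := hcol j
    have h2 := hcol z
    rw [Finset.sum_congr rfl fun i (_ : i ∈ Finset.univ) => hentry i j] at h1
    simp only [Finset.sum_sub_distrib, Finset.sum_add_distrib, Finset.sum_const,
      Finset.card_univ, Fintype.card_fin, nsmul_eq_mul] at h1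
    rw [Finset.sum_congr rfl fun i (_ : i ∈ Finset.univ) => hiz i] at h1
    rw [Finset.sum_congr rfl fun i (_ : i ∈ Finset.univ) => hiz i] at h2
    simp only [Finset.sum_const, Finset.card_univ, Fintype.card_fin, nsmul_eq_mul] at h1 h2
    have h3 : (n:ℝ) * D z j = (n:ℝ) * D z z := by linarith
    exact mul_left_cancel₀ hn0 h3
  have hall : ∀ i j, D i j = D z z := by
    intro i j
    rw [hentry i j, hiz i, hzj j]
    ring
  have hval : D z z = (n:ℝ)⁻¹ := by
    have h1 := hrow z
    rw [Finset.sum_congr rfl fun j (_ : j ∈ Finset.univ) => hall z j, Finset.sum_const,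
      Finset.card_univ, Fintype.card_fin, nsmul_eq_mul] at h1
    have h4 : D z z * (n:ℝ) = 1 := by linarith
    rw [(eq_div_iff hn0).mpr h4, one_div]
  ext i j
  rw [hall i j, hval]
  rfl

/-! ### The key inequality -/

lemma key_ineq (hn : 2 ≤ n) {p : ℝ} (hp : 1 ≤ p) {D : Matrix (Fin n) (Fin n) ℝ}
    (σ : Equiv.Perm (Fin n)) (hD : D ∈ doublyStochastic ℝ (Fin n)) :
    (n:ℝ) - ∑ i, D i (σ i)
      ≤ ((n:ℝ) - 1) ^ (1 - 1/p) * schattenNorm p (D - σ.permMatrix ℝ) := by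
  set A := D - σ.permMatrix ℝ with hA
  have hdet : A.det = 0 := det_sub_ds (by omega) hD permMatrix_mem_doublyStochastic
  obtain ⟨j₀, hj₀⟩ := exists_sv_zero hdet
  calc (n:ℝ) - ∑ i, D i (σ i) = ((-(σ.permMatrix ℝ)ᵀ) * A).trace :=
        (trace_neg_perm_mul σ D).symm
    _ ≤ ∑ j, singularValues A j := trace_le_sum_sv A _ (perm_orth σ)
    _ ≤ ((n:ℝ) - 1) ^ (1 - 1/p) * (∑ j, singularValues A j ^ p) ^ (1/p) :=
        sum_le_rpow_mul hn hp _ (sv_nonneg A) hj₀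
    _ = _ := rfl

lemma b_split {p : ℝ} (hp : 1 ≤ p) (hb : (0:ℝ) < (n:ℝ) - 1) :
    ((n:ℝ) - 1) ^ (1 - 1/p) * ((n:ℝ) - 1) ^ (1/p) = (n:ℝ) - 1 := by
  rw [← Real.rpow_add hb, show (1 - 1/p) + 1/p = 1 by ring, Real.rpow_one]

lemma rpow_le_schatten (hn : 2 ≤ n) {p : ℝ} (hp : 1 ≤ p) {D : Matrix (Fin n) (Fin n) ℝ}
    (hD : D ∈ doublyStochastic ℝ (Fin n)) {σ : Equiv.Perm (Fin n)}
    (hσ : ∑ i, D i (σ i) ≤ 1) :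
    ((n:ℝ) - 1) ^ (1/p) ≤ schattenNorm p (D - σ.permMatrix ℝ) := by
  have hb : (0:ℝ) < (n:ℝ) - 1 := by
    have : (2:ℝ) ≤ (n:ℝ) := by exact_mod_cast hn
    linarith
  have hk := key_ineq hn hp σ hD
  have h4 : ((n:ℝ) - 1) ^ (1 - 1/p) * ((n:ℝ) - 1) ^ (1/p)
      ≤ ((n:ℝ) - 1) ^ (1 - 1/p) * schattenNorm p (D - σ.permMatrix ℝ) := by
    rw [b_split hp hb]
    linarith
  exact le_of_mul_le_mul_left h4 (Real.rpow_pos_of_pos hb _)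

lemma one_le_trace_of_schatten_le (hn : 2 ≤ n) {p : ℝ} (hp : 1 ≤ p)
    {D : Matrix (Fin n) (Fin n) ℝ} (hD : D ∈ doublyStochastic ℝ (Fin n))
    {σ : Equiv.Perm (Fin n)}
    (h : schattenNorm p (D - σ.permMatrix ℝ) ≤ ((n:ℝ) - 1) ^ (1/p)) :
    1 ≤ ∑ i, D i (σ i) := by
  have hb : (0:ℝ) < (n:ℝ) - 1 := by
    have : (2:ℝ) ≤ (n:ℝ) := by exact_mod_cast hn
    linarith
  have hk := key_ineq hn hp σ hD
  have h2 : ((n:ℝ) - 1) ^ (1 - 1/p) * schattenNorm p (D - σ.permMatrix ℝ)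
      ≤ ((n:ℝ) - 1) ^ (1 - 1/p) * ((n:ℝ) - 1) ^ (1/p) :=
    mul_le_mul_of_nonneg_left h (Real.rpow_nonneg hb.le _)
  have h3 := b_split hp hb
  linarith

end ChebAux

open ChebAux

/-- For `n ≥ 2` and `1 ≤ p < ∞`, the Chebyshev radius of `Ω_n` with
centers constrained to `Ω_n` equals `(n − 1)^{1/p}`; `J_n` attains it and is the
unique doubly stochastic matrix doing so. -/
theorem chebyshev_center_constrained_schatten {n : ℕ} (hn : 2 ≤ n) {p : ℝ} (hp : 1 ≤ p) :
    (⨅ D : {M : Matrix (Fin n) (Fin n) ℝ // M ∈ doublyStochastic ℝ (Fin n)},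
        sSup {r : ℝ | ∃ D' ∈ doublyStochastic ℝ (Fin n), r = schattenNorm p (D.1 - D')}) =
        ((n : ℝ) - 1) ^ (1 / p) ∧
      sSup {r : ℝ | ∃ D' ∈ doublyStochastic ℝ (Fin n), r = schattenNorm p (matJ n - D')} =
        ((n : ℝ) - 1) ^ (1 / p) ∧
      ∀ D ∈ doublyStochastic ℝ (Fin n),
        sSup {r : ℝ | ∃ D' ∈ doublyStochastic ℝ (Fin n), r = schattenNorm p (D - D')} =
          ((n : ℝ) - 1) ^ (1 / p) → D = matJ n := by
  have hn1 : 1 ≤ n := by omega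
  have hb : (0:ℝ) < (n:ℝ) - 1 := by
    have : (2:ℝ) ≤ (n:ℝ) := by exact_mod_cast hn
    linarith
  set c : ℝ := ((n : ℝ) - 1) ^ (1 / p) with hc
  -- boundedness of the sets
  have hBdd : ∀ D ∈ doublyStochastic ℝ (Fin n), BddAbove
      {r : ℝ | ∃ D' ∈ doublyStochastic ℝ (Fin n), r = schattenNorm p (D - D')} := by
    intro D hD
    refine ⟨c * 2, ?_⟩
    rintro r ⟨D', hD', rfl⟩
    exact schattenNorm_le_of hn hp (by norm_num)
      (sv_le_of_bound (by norm_num) (sub_ds_contraction hD hD'))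
      (exists_sv_zero (det_sub_ds hn1 hD hD'))
  -- each set is nonempty
  have hNe : ∀ D : Matrix (Fin n) (Fin n) ℝ,
      {r : ℝ | ∃ D' ∈ doublyStochastic ℝ (Fin n), r = schattenNorm p (D - D')}.Nonempty :=
    fun D => ⟨schattenNorm p (D - 1), 1, Submonoid.one_mem _, rfl⟩
  -- lower bound for every center
  have hLow : ∀ D ∈ doublyStochastic ℝ (Fin n), c ≤
      sSup {r : ℝ | ∃ D' ∈ doublyStochastic ℝ (Fin n), r = schattenNorm p (D - D')} := by
    intro D hD
    obtain ⟨σ, hσ⟩ := exists_perm_trace_le hD hn1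
    calc c ≤ schattenNorm p (D - σ.permMatrix ℝ) := rpow_le_schatten hn hp hD hσ
      _ ≤ _ := le_csSup (hBdd D hD)
          ⟨σ.permMatrix ℝ, permMatrix_mem_doublyStochastic, rfl⟩
  -- value at J
  have hJmem := matJ_mem (n := n) hn1
  have hSJ : sSup {r : ℝ | ∃ D' ∈ doublyStochastic ℝ (Fin n),
      r = schattenNorm p (matJ n - D')} = c := by
    refine le_antisymm ?_ ?_
    · refine csSup_le (hNe (matJ n)) ?_
      rintro r ⟨D', hD', rfl⟩
      have h1 := schattenNorm_le_of hn hp zero_le_one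
        (sv_le_of_bound zero_le_one (J_sub_contraction hn1 hD'))
        (exists_sv_zero (det_sub_ds hn1 hJmem hD'))
      rw [mul_one] at h1
      exact h1
    · calc c = schattenNorm p (matJ n - 1) := (schattenNorm_J_sub_one hn hp).symm
        _ ≤ _ := le_csSup (hBdd _ hJmem) ⟨1, Submonoid.one_mem _, rfl⟩
  refine ⟨?_, hSJ, ?_⟩
  · refine le_antisymm ?_ ?_
    · have := ciInf_le (f := fun D : {M : Matrix (Fin n) (Fin n) ℝ //
          M ∈ doublyStochastic ℝ (Fin n)} =>
          sSup {r : ℝ | ∃ D' ∈ doublyStochastic ℝ (Fin n), r = schattenNorm p (D.1 - D')})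
        (⟨c, ?_⟩ : BddBelow _) ⟨matJ n, hJmem⟩
      · exact this.trans_eq hSJ
      · rintro y ⟨D, rfl⟩
        exact hLow D.1 D.2
    · exact le_ciInf fun D => hLow D.1 D.2
  · intro D hD hS
    refine eq_matJ_of_traces hD hn (traces_eq_one hD hn1 fun σ => ?_)
    refine one_le_trace_of_schatten_le hn hp hD ?_
    calc schattenNorm p (D - σ.permMatrix ℝ)
        ≤ sSup {r : ℝ | ∃ D' ∈ doublyStochastic ℝ (Fin n), r = schattenNorm p (D - D')} :=
          le_csSup (hBdd D hD) ⟨σ.permMatrix ℝ, permMatrix_mem_doublyStochastic, rfl⟩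
      _ = c := hS
end

section
/- Let ‖·‖ be any norm on the space of n × n real matrices that is permutation-invariant, i.e., ‖PAQ‖ = ‖A‖ for all n × n real matrices A and all permutation matrices P and Q. Then J_n is a Chebyshev center of Ω_n relative to (Ω_n, ‖·‖): the infimum over D ∈ Ω_n of max_{D' ∈ Ω_n} ‖D − D'‖ is attained at D = J_n, and the associated Chebyshev radius equals ‖J_n − I_n‖. -/
open Matrix BigOperators

section aux
variable {n : ℕ} {N : Matrix (Fin n) (Fin n) ℝ → ℝ}

private lemma aux_perm_one : ((1 : Equiv.Perm (Fin n)).permMatrix ℝ) = 1 := by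
  rw [Equiv.Perm.permMatrix]
  rw [show (1 : Equiv.Perm (Fin n)) = Equiv.refl (Fin n) from rfl]
  rw [Equiv.toPEquiv_refl, PEquiv.toMatrix_refl]

private lemma aux_perm_mul (σ τ : Equiv.Perm (Fin n)) :
    σ.permMatrix ℝ * τ.permMatrix ℝ = (τ * σ).permMatrix ℝ := by
  show σ.toPEquiv.toMatrix * τ.toPEquiv.toMatrix = (τ * σ).toPEquiv.toMatrix
  rw [Equiv.Perm.mul_def, Equiv.toPEquiv_trans, PEquiv.toMatrix_trans]

private lemma aux_N_zero (hsmul : ∀ (c : ℝ) A, N (c • A) = |c| * N A) : N 0 = 0 := by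
  have := hsmul 0 0; simpa using this

private lemma aux_N_sum (hadd : ∀ A B, N (A + B) ≤ N A + N B)
    (hsmul : ∀ (c : ℝ) A, N (c • A) = |c| * N A)
    {ι : Type*} (s : Finset ι) (f : ι → Matrix (Fin n) (Fin n) ℝ) :
    N (∑ i ∈ s, f i) ≤ ∑ i ∈ s, N (f i) := by
  classical
  induction s using Finset.induction_on with
  | empty => simp [aux_N_zero hsmul]
  | insert _ _ h ih =>
      rw [Finset.sum_insert h, Finset.sum_insert h]
      exact le_trans (hadd _ _) (by linarith)

private lemma aux_N_right (hperm : ∀ (A : Matrix (Fin n) (Fin n) ℝ) (σ τ : Equiv.Perm (Fin n)),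
      N (σ.permMatrix ℝ * A * τ.permMatrix ℝ) = N A)
    (A : Matrix (Fin n) (Fin n) ℝ) (τ : Equiv.Perm (Fin n)) :
    N (A * τ.permMatrix ℝ) = N A := by
  have := hperm A 1 τ; rwa [aux_perm_one, one_mul] at this

private lemma aux_N_left (hperm : ∀ (A : Matrix (Fin n) (Fin n) ℝ) (σ τ : Equiv.Perm (Fin n)),
      N (σ.permMatrix ℝ * A * τ.permMatrix ℝ) = N A)
    (A : Matrix (Fin n) (Fin n) ℝ) (σ : Equiv.Perm (Fin n)) :
    N (σ.permMatrix ℝ * A) = N A := by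
  have := hperm A σ 1; rwa [aux_perm_one, mul_one] at this

private lemma aux_matJ_mul_perm (σ : Equiv.Perm (Fin n)) :
    matJ n * σ.permMatrix ℝ = matJ n := by
  rw [Equiv.Perm.permMatrix, PEquiv.mul_toMatrix_toPEquiv]
  ext i j
  simp [matJ]

/-- Lemma A : upper bound. -/
private lemma aux_ub (hadd : ∀ A B, N (A + B) ≤ N A + N B)
    (hsmul : ∀ (c : ℝ) A, N (c • A) = |c| * N A)
    (hperm : ∀ (A : Matrix (Fin n) (Fin n) ℝ) (σ τ : Equiv.Perm (Fin n)),
      N (σ.permMatrix ℝ * A * τ.permMatrix ℝ) = N A)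
    {D' : Matrix (Fin n) (Fin n) ℝ} (hD' : D' ∈ doublyStochastic ℝ (Fin n)) :
    N (matJ n - D') ≤ N (matJ n - 1) := by
  obtain ⟨w, hw0, hw1, hwsum⟩ := exists_eq_sum_perm_of_mem_doublyStochastic hD'
  have hdecomp : matJ n - D' = ∑ σ : Equiv.Perm (Fin n), w σ • (matJ n - σ.permMatrix ℝ) := by
    rw [← hwsum]
    simp only [smul_sub, Finset.sum_sub_distrib, ← Finset.sum_smul, hw1, one_smul]
  calc N (matJ n - D') ≤ ∑ σ : Equiv.Perm (Fin n), N (w σ • (matJ n - σ.permMatrix ℝ)) := by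
        rw [hdecomp]; exact aux_N_sum hadd hsmul _ _
    _ = ∑ σ : Equiv.Perm (Fin n), w σ * N (matJ n - 1) := by
        refine Finset.sum_congr rfl fun σ _ => ?_
        rw [hsmul, abs_of_nonneg (hw0 σ)]
        congr 1
        have : matJ n - σ.permMatrix ℝ = (matJ n - 1) * σ.permMatrix ℝ := by
          rw [sub_mul, one_mul, aux_matJ_mul_perm]
        rw [this, aux_N_right hperm]
    _ = N (matJ n - 1) := by rw [← Finset.sum_mul, hw1, one_mul]

end aux

section aux2
variable {n : ℕ} {N : Matrix (Fin n) (Fin n) ℝ → ℝ}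

/-- Lemma B : lower bound via averaging over cyclic shifts. -/
private lemma aux_lb (hadd : ∀ A B, N (A + B) ≤ N A + N B)
    (hsmul : ∀ (c : ℝ) A, N (c • A) = |c| * N A)
    (hperm : ∀ (A : Matrix (Fin n) (Fin n) ℝ) (σ τ : Equiv.Perm (Fin n)),
      N (σ.permMatrix ℝ * A * τ.permMatrix ℝ) = N A)
    {D : Matrix (Fin n) (Fin n) ℝ} (hD : D ∈ doublyStochastic ℝ (Fin n)) :
    N (matJ n - 1) ≤ sSup {r : ℝ | ∃ D' ∈ doublyStochastic ℝ (Fin n), r = N (D - D')} := by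
  set s := {r : ℝ | ∃ D' ∈ doublyStochastic ℝ (Fin n), r = N (D - D')} with hs
  have hbdd : BddAbove s := by
    refine ⟨N (D - matJ n) + N (matJ n - 1), ?_⟩
    rintro r ⟨D', hD', rfl⟩
    calc N (D - D') = N ((D - matJ n) + (matJ n - D')) := by rw [sub_add_sub_cancel]
      _ ≤ N (D - matJ n) + N (matJ n - D') := hadd _ _
      _ ≤ N (D - matJ n) + N (matJ n - 1) := by
          have := aux_ub hadd hsmul hperm hD'; linarith
  have hmem : ∀ σ : Equiv.Perm (Fin n), N (D - σ.permMatrix ℝ) ∈ s := fun σ =>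
    ⟨σ.permMatrix ℝ, permMatrix_mem_doublyStochastic, rfl⟩
  rcases Nat.eq_zero_or_pos n with h0 | hpos
  · subst h0
    have hz : matJ 0 - 1 = 0 := Subsingleton.elim _ _
    rw [hz, aux_N_zero hsmul]
    refine le_csSup hbdd ⟨D, hD, ?_⟩
    rw [sub_self]; exact (aux_N_zero hsmul).symm
  · haveI : NeZero n := ⟨hpos.ne'⟩
    have hn : (n : ℝ) ≠ 0 := Nat.cast_ne_zero.2 hpos.ne'
    have hmul : ∀ (m : Fin n) (j : Fin n) (i : Fin n),
        (Equiv.Perm.permMatrix ℝ (Equiv.addLeft m) *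
          (D - Equiv.Perm.permMatrix ℝ (Equiv.addLeft m)⁻¹)) i j
          = D (m + i) j - (if i = j then (1:ℝ) else 0) := by
      intro m j i
      rw [show Equiv.Perm.permMatrix ℝ (Equiv.addLeft m)
            = (Equiv.addLeft m).toPEquiv.toMatrix from rfl,
        PEquiv.toMatrix_toPEquiv_mul]
      have hinv : (Equiv.addLeft m)⁻¹ (m + i) = i := by
        show (Equiv.addLeft m).symm (m + i) = i
        simp
      simp only [Matrix.submatrix_apply, id, Matrix.sub_apply, Equiv.coe_addLeft]
      congr 1
      rw [show Equiv.Perm.permMatrix ℝ (Equiv.addLeft m)⁻¹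
            = ((Equiv.addLeft m)⁻¹ : Equiv.Perm (Fin n)).toPEquiv.toMatrix from rfl]
      rw [PEquiv.toMatrix_apply, Equiv.toPEquiv_apply, hinv]
      simp [eq_comm]
    have key : matJ n - 1 = (n:ℝ)⁻¹ •
        ∑ m : Fin n, Equiv.Perm.permMatrix ℝ (Equiv.addLeft m) *
          (D - Equiv.Perm.permMatrix ℝ (Equiv.addLeft m)⁻¹) := by
      ext i j
      have hcol : ∑ m : Fin n, D (m + i) j = 1 := by
        have he := Fintype.sum_equiv (Equiv.addRight i) (fun m => D (m + i) j)
          (fun k => D k j) (fun m => by simp)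
        rw [he]
        exact sum_col_of_mem_doublyStochastic hD j
      simp only [Matrix.sub_apply, Matrix.smul_apply, Matrix.sum_apply, Matrix.one_apply,
        matJ, Matrix.of_apply, smul_eq_mul]
      rw [Finset.sum_congr rfl fun m _ => hmul m j i, Finset.sum_sub_distrib, hcol,
        Finset.sum_const, Finset.card_univ, Fintype.card_fin, nsmul_eq_mul]
      split_ifs <;> field_simp
    have step1 : N (matJ n - 1) ≤ (n:ℝ)⁻¹ *
        ∑ m : Fin n, N (D - Equiv.Perm.permMatrix ℝ (Equiv.addLeft m)⁻¹) := by
      rw [key, hsmul, abs_of_nonneg (inv_nonneg.2 (Nat.cast_nonneg n))]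
      refine mul_le_mul_of_nonneg_left ?_ (inv_nonneg.2 (Nat.cast_nonneg n))
      refine le_trans (aux_N_sum hadd hsmul _ _) ?_
      exact Finset.sum_le_sum fun m _ => le_of_eq (aux_N_left hperm _ _)
    refine le_trans step1 ?_
    have step2 : ∑ m : Fin n, N (D - Equiv.Perm.permMatrix ℝ (Equiv.addLeft m)⁻¹)
        ≤ (n : ℝ) * sSup s := by
      have : ∀ m : Fin n, N (D - Equiv.Perm.permMatrix ℝ (Equiv.addLeft m)⁻¹) ≤ sSup s :=
        fun m => le_csSup hbdd (hmem _)
      calc ∑ m : Fin n, N (D - Equiv.Perm.permMatrix ℝ (Equiv.addLeft m)⁻¹)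
          ≤ ∑ _m : Fin n, sSup s := Finset.sum_le_sum fun m _ => this m
        _ = (n : ℝ) * sSup s := by
            rw [Finset.sum_const, Finset.card_univ, Fintype.card_fin, nsmul_eq_mul]
    calc (n:ℝ)⁻¹ * ∑ m : Fin n, N (D - Equiv.Perm.permMatrix ℝ (Equiv.addLeft m)⁻¹)
        ≤ (n:ℝ)⁻¹ * ((n:ℝ) * sSup s) :=
          mul_le_mul_of_nonneg_left step2 (inv_nonneg.2 (Nat.cast_nonneg n))
      _ = sSup s := by field_simp

end aux2

/-- For any permutation-invariant norm `N` on `n × n` real matrices,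
`J_n` is a Chebyshev center of `Ω_n` relative to `(Ω_n, N)` and the Chebyshev radius
equals `N (J_n − I_n)`. -/
theorem matJ_is_chebyshev_center_of_permInvariant_norm {n : ℕ}
    (N : Matrix (Fin n) (Fin n) ℝ → ℝ)
    (hadd : ∀ A B, N (A + B) ≤ N A + N B)
    (hsmul : ∀ (c : ℝ) (A), N (c • A) = |c| * N A)
    (hdef : ∀ A, N A = 0 → A = 0)
    (hperm : ∀ (A : Matrix (Fin n) (Fin n) ℝ) (σ τ : Equiv.Perm (Fin n)),
      N (σ.permMatrix ℝ * A * τ.permMatrix ℝ) = N A) :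
    (⨅ D : {M : Matrix (Fin n) (Fin n) ℝ // M ∈ doublyStochastic ℝ (Fin n)},
        sSup {r : ℝ | ∃ D' ∈ doublyStochastic ℝ (Fin n), r = N (D.1 - D')}) =
        sSup {r : ℝ | ∃ D' ∈ doublyStochastic ℝ (Fin n), r = N (matJ n - D')} ∧
      sSup {r : ℝ | ∃ D' ∈ doublyStochastic ℝ (Fin n), r = N (matJ n - D')} =
        N (matJ n - 1) := by
  have hJmem : matJ n ∈ doublyStochastic ℝ (Fin n) := by
    rw [mem_doublyStochastic_iff_sum]
    refine ⟨fun i j => by simp only [matJ, Matrix.of_apply]; positivity, fun i => ?_, fun j => ?_⟩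
    · have hn : (n:ℝ) ≠ 0 := Nat.cast_ne_zero.2 (Fin.pos i).ne'
      simp [matJ, Finset.sum_const, Finset.card_univ, mul_inv_cancel₀ hn]
    · have hn : (n:ℝ) ≠ 0 := Nat.cast_ne_zero.2 (Fin.pos j).ne'
      simp [matJ, Finset.sum_const, Finset.card_univ, mul_inv_cancel₀ hn]
  have h1mem : (1 : Matrix (Fin n) (Fin n) ℝ) ∈ doublyStochastic ℝ (Fin n) :=
    aux_perm_one ▸ permMatrix_mem_doublyStochastic
  have hne : {r : ℝ | ∃ D' ∈ doublyStochastic ℝ (Fin n), r = N (matJ n - D')}.Nonempty :=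
    ⟨N (matJ n - 1), 1, h1mem, rfl⟩
  have hbddJ : BddAbove {r : ℝ | ∃ D' ∈ doublyStochastic ℝ (Fin n), r = N (matJ n - D')} := by
    refine ⟨N (matJ n - 1), ?_⟩
    rintro r ⟨D', hD', rfl⟩
    exact aux_ub hadd hsmul hperm hD'
  have hsecond : sSup {r : ℝ | ∃ D' ∈ doublyStochastic ℝ (Fin n), r = N (matJ n - D')}
      = N (matJ n - 1) := by
    refine le_antisymm (csSup_le hne ?_) (le_csSup hbddJ ⟨1, h1mem, rfl⟩)
    rintro r ⟨D', hD', rfl⟩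
    exact aux_ub hadd hsmul hperm hD'
  haveI : Nonempty {M : Matrix (Fin n) (Fin n) ℝ // M ∈ doublyStochastic ℝ (Fin n)} :=
    ⟨⟨matJ n, hJmem⟩⟩
  refine ⟨le_antisymm ?_ ?_, hsecond⟩
  · have hbb : BddBelow (Set.range
        fun D : {M : Matrix (Fin n) (Fin n) ℝ // M ∈ doublyStochastic ℝ (Fin n)} =>
          sSup {r : ℝ | ∃ D' ∈ doublyStochastic ℝ (Fin n), r = N (D.1 - D')}) := by
      refine ⟨N (matJ n - 1), ?_⟩
      rintro r ⟨D, rfl⟩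
      exact aux_lb hadd hsmul hperm D.2
    exact ciInf_le hbb ⟨matJ n, hJmem⟩
  · refine le_ciInf fun D => ?_
    rw [hsecond]
    exact aux_lb hadd hsmul hperm D.2
end
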